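/- arXiv:2104.08788 — 5 statements merged into one kernel-verified Lean document; each statement's English description precedes it below -/
import Mathlib

section
/- A finite group G is σ-nilpotent if and only if G is the internal direct product H_1 × ⋯ × H_t, where {H_1, …, H_t} is a complete Hall σ-set of G (i.e., each H_j is a Hall σ_{i_j}-subgroup for some σ_{i_j} ∈ σ(G), with exactly one Hall σ_i-subgroup for each σ_i ∈ σ(G)). -/
open Pointwise

/-- `σ` is a partition of the set of all primes. -/
def IsPrimePartition {ι : Type*} (σ : ι → Set ℕ) : Prop :=
  (∀ i, ∀ p ∈ σ i, p.Prime) ∧ (∀ p : ℕ, p.Prime → ∃! i, p ∈ σ i)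

/-- every prime dividing `n` lies in `σ i`. -/
def PrimaryIn {ι : Type*} (σ : ι → Set ℕ) (i : ι) (n : ℕ) : Prop :=
  ∀ p : ℕ, p.Prime → p ∣ n → p ∈ σ i

/-- `σ i ∈ σ(G)` : some prime of `σ i` divides `|G|`. -/
def MemSigma {ι : Type*} (σ : ι → Set ℕ) (i : ι) (G : Type*) [Group G] : Prop :=
  ∃ p : ℕ, p.Prime ∧ p ∈ σ i ∧ p ∣ Nat.card G

/-- the centralizer of the factor `H/K` in `G` (as a set). -/
def chiefCentralizer {G : Type*} [Group G] (H K : Subgroup G) : Set G :=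
  {g : G | ∀ h ∈ H, g * h * g⁻¹ * h⁻¹ ∈ K}

/-- `H/K` is a chief factor of `G`. -/
def IsChiefFactor {G : Type*} [Group G] (H K : Subgroup G) : Prop :=
  H.Normal ∧ K.Normal ∧ K < H ∧
    ∀ L : Subgroup G, L.Normal → K ≤ L → L ≤ H → L = K ∨ L = H

/-- `H/K` is σ-central in `G` : `(H/K) ⋊ (G/C_G(H/K))` is σ-primary,
i.e. every prime dividing `|H/K| · |G/C_G(H/K)|` lies in one block of σ. -/
def SigmaCentral {ι : Type*} (σ : ι → Set ℕ) {G : Type*} [Group G]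
    (H K : Subgroup G) : Prop :=
  ∃ i, PrimaryIn σ i ((Nat.card H / Nat.card K) * (Nat.card G / Nat.card (chiefCentralizer H K)))

/-- `G` is σ-nilpotent: every chief factor is σ-central. -/
def SigmaNilpotent {ι : Type*} (σ : ι → Set ℕ) (G : Type*) [Group G] : Prop :=
  ∀ H K : Subgroup G, IsChiefFactor H K → SigmaCentral σ H K

/-- `G` is σ-soluble: every chief factor is σ-primary. -/
def SigmaSoluble {ι : Type*} (σ : ι → Set ℕ) (G : Type*) [Group G] : Prop :=
  ∀ H K : Subgroup G, IsChiefFactor H K → ∃ i, PrimaryIn σ i (Nat.card H / Nat.card K)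

/-- `H` is a Hall π-subgroup of `G`. -/
def IsHall {G : Type*} [Group G] (π : Set ℕ) (H : Subgroup G) : Prop :=
  (∀ p : ℕ, p.Prime → p ∣ Nat.card H → p ∈ π) ∧
  (∀ p : ℕ, p.Prime → p ∣ H.index → p ∉ π)

/-- `H` is a π-subgroup of `G`. -/
def IsPiSubgroup {G : Type*} [Group G] (π : Set ℕ) (H : Subgroup G) : Prop :=
  ∀ p : ℕ, p.Prime → p ∣ Nat.card H → p ∈ π

/-- `K` is a Hall π-subgroup of the subgroup `A` of `G`. -/
def IsHallIn {G : Type*} [Group G] (π : Set ℕ) (K A : Subgroup G) : Prop :=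
  K ≤ A ∧ (∀ p : ℕ, p.Prime → p ∣ Nat.card K → p ∈ π) ∧
    (∀ p : ℕ, p.Prime → p ∣ K.relIndex A → p ∉ π)

/-- `G` satisfies `D_π`. -/
def SatisfiesD (π : Set ℕ) (G : Type*) [Group G] : Prop :=
  (∃ H : Subgroup G, IsHall π H) ∧
  (∀ H K : Subgroup G, IsHall π H → IsHall π K →
      ∃ g : G, K = Subgroup.map (MulAut.conj g).toMonoidHom H) ∧
  (∀ S : Subgroup G, IsPiSubgroup π S →
      ∃ H : Subgroup G, IsHall π H ∧ S ≤ H)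

/-- `N` is a minimal normal subgroup of `G`. -/
def IsMinimalNormal {G : Type*} [Group G] (N : Subgroup G) : Prop :=
  N.Normal ∧ N ≠ ⊥ ∧ ∀ L : Subgroup G, L.Normal → L ≤ N → L = ⊥ ∨ L = N

/-- the σ-Fitting subgroup: product of all normal σ-nilpotent subgroups. -/
def sigmaFitting {ι : Type*} (σ : ι → Set ℕ) (G : Type*) [Group G] : Subgroup G :=
  ⨆ H ∈ {H : Subgroup G | H.Normal ∧ SigmaNilpotent σ H}, H

/-- `O_π(G)`: the largest normal π-subgroup, i.e. product of all normal π-subgroups. -/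
def Opi (π : Set ℕ) (G : Type*) [Group G] : Subgroup G :=
  ⨆ H ∈ {H : Subgroup G | H.Normal ∧ IsPiSubgroup π H}, H

/-! ### Auxiliary lemmas -/

section Aux

variable {ι : Type*}

lemma botNormal {G : Type*} [Group G] : (⊥ : Subgroup G).Normal := inferInstance

lemma primaryIn_of_dvd {σ : ι → Set ℕ} {i : ι} {m n : ℕ} (h : PrimaryIn σ i n) (hd : m ∣ n) :
    PrimaryIn σ i m := fun p hp hpm => h p hp (hpm.trans hd)

lemma IsPrimePartition.not_mem {σ : ι → Set ℕ} (hσ : IsPrimePartition σ) {i j : ι}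
    (hij : i ≠ j) {p : ℕ} (hpi : p ∈ σ i) : p ∉ σ j := by
  intro hpj
  have hp := hσ.1 i p hpi
  obtain ⟨k, -, hk⟩ := hσ.2 p hp
  exact hij ((hk i hpi).trans (hk j hpj).symm)

lemma coprime_of_primary {σ : ι → Set ℕ} (hσ : IsPrimePartition σ) {i j : ι} (hij : i ≠ j)
    {a b : ℕ} (hA : ∀ p, p.Prime → p ∣ a → p ∈ σ i)
    (hB : ∀ p, p.Prime → p ∣ b → p ∈ σ j) : Nat.Coprime a b := by
  by_contra h
  obtain ⟨p, hp, hpa, hpb⟩ := Nat.Prime.not_coprime_iff_dvd.mp h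
  exact hσ.not_mem hij (hA p hp hpa) (hB p hp hpb)

variable {G : Type*} [Group G]

lemma card_div_card_eq_relindex [Finite G] {K H : Subgroup G} (h : K ≤ H) :
    Nat.card H / Nat.card K = K.relIndex H := by
  have h1 : Nat.card (K.subgroupOf H) * (K.subgroupOf H).index = Nat.card H :=
    Subgroup.card_mul_index _
  have h2 : Nat.card (K.subgroupOf H) = Nat.card K :=
    Nat.card_congr (Subgroup.subgroupOfEquivOfLe h).toEquiv
  rw [Subgroup.relIndex, ← h1, h2, Nat.mul_div_cancel_left _ Nat.card_pos]

lemma card_div_card_eq_index [Finite G] (H : Subgroup G) :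
    Nat.card G / Nat.card H = H.index := by
  conv_lhs => rw [← Subgroup.card_mul_index H]
  rw [Nat.mul_div_cancel_left _ Nat.card_pos]

lemma relindex_dvd_card {K H : Subgroup G} [Finite G] : K.relIndex H ∣ Nat.card H :=
  Dvd.intro_left (Nat.card (K.subgroupOf H)) (Subgroup.card_mul_index _)

/-- the chief centralizer as a subgroup. -/
def chiefCent (H K : Subgroup G) (hH : H.Normal) (hK : K.Normal) : Subgroup G where
  carrier := chiefCentralizer H K
  one_mem' := by
    intro h _
    have e : (1 : G) * h * (1 : G)⁻¹ * h⁻¹ = 1 := by group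
    rw [e]; exact K.one_mem
  mul_mem' := by
    intro a b ha hb h hh
    have key : (a * b) * h * (a * b)⁻¹ * h⁻¹
        = (a * (b * h * b⁻¹ * h⁻¹) * a⁻¹) * (a * h * a⁻¹ * h⁻¹) := by group
    rw [key]
    exact K.mul_mem (hK.conj_mem _ (hb h hh) a) (ha h hh)
  inv_mem' := by
    intro a ha h hh
    have hh' : a⁻¹ * h * a ∈ H := by
      have := hH.conj_mem h hh a⁻¹
      simpa using this
    have h1 := ha _ hh'
    have key : a⁻¹ * h * (a⁻¹)⁻¹ * h⁻¹ = (a * (a⁻¹ * h * a) * a⁻¹ * (a⁻¹ * h * a)⁻¹)⁻¹ := by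
      group
    rw [key]
    exact K.inv_mem h1

lemma chiefCent_normal (H K : Subgroup G) (hH : H.Normal) (hK : K.Normal) :
    (chiefCent H K hH hK).Normal := by
  constructor
  intro a ha g h hh
  have hh' : g⁻¹ * h * g ∈ H := by
    have := hH.conj_mem h hh g⁻¹
    simpa using this
  have h1 := ha _ hh'
  have key : (g * a * g⁻¹) * h * (g * a * g⁻¹)⁻¹ * h⁻¹
      = g * (a * (g⁻¹ * h * g) * a⁻¹ * (g⁻¹ * h * g)⁻¹) * g⁻¹ := by group
  rw [key]
  exact hK.conj_mem _ h1 g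

lemma mem_chiefCent_iff {H K : Subgroup G} {hH : H.Normal} {hK : K.Normal} {g : G} :
    g ∈ chiefCent H K hH hK ↔ ∀ h ∈ H, g * h * g⁻¹ * h⁻¹ ∈ K := Iff.rfl

lemma card_chiefCentralizer (H K : Subgroup G) (hH : H.Normal) (hK : K.Normal) :
    Nat.card (chiefCentralizer H K) = Nat.card (chiefCent H K hH hK) := rfl

lemma card_div_chiefCentralizer [Finite G] (H K : Subgroup G) (hH : H.Normal) (hK : K.Normal) :
    Nat.card G / Nat.card (chiefCentralizer H K) = (chiefCent H K hH hK).index := by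
  rw [card_chiefCentralizer H K hH hK, card_div_card_eq_index]

end Aux

/-! ### Decomposition lemmas for families of commuting subgroups -/

section Decomp

variable {ι : Type*} {G : Type*} [Group G] [Finite G]

lemma pairwise_subtype {s : Finset ι} {H : ι → Subgroup G}
    (hcomm : ∀ i ∈ s, ∀ j ∈ s, i ≠ j → ∀ x ∈ H i, ∀ y ∈ H j, Commute x y) :
    Pairwise fun i j : {x // x ∈ s} =>
      ∀ x y : G, x ∈ H i.1 → y ∈ H j.1 → Commute x y := by
  intro i j hij x y hx hy
  exact hcomm i.1 i.2 j.1 j.2 (fun e => hij (Subtype.ext e)) x hx y hy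

lemma card_biSup {s : Finset ι} {H : ι → Subgroup G}
    (hcomm : ∀ i ∈ s, ∀ j ∈ s, i ≠ j → ∀ x ∈ H i, ∀ y ∈ H j, Commute x y)
    (hcop : ∀ i ∈ s, ∀ j ∈ s, i ≠ j → Nat.Coprime (Nat.card (H i)) (Nat.card (H j))) :
    Nat.card (⨆ i ∈ s, H i : Subgroup G) = ∏ i ∈ s, Nat.card (H i) := by
  classical
  letI : ∀ i : {x // x ∈ s}, Fintype (H i.1) := fun i => Fintype.ofFinite _
  have hcomm' := pairwise_subtype hcomm
  have hind : iSupIndep (fun i : {x // x ∈ s} => H i.1) := by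
    refine Subgroup.independent_of_coprime_order hcomm' ?_
    intro i j hij
    rw [← Nat.card_eq_fintype_card, ← Nat.card_eq_fintype_card]
    exact hcop i.1 i.2 j.1 j.2 (fun e => hij (Subtype.ext e))
  have hinj := Subgroup.injective_noncommPiCoprod_of_iSupIndep (hcomm := hcomm') hind
  have hrange := Subgroup.noncommPiCoprod_range (hcomm := hcomm')
  have htop : (⨆ i ∈ s, H i) = ⨆ i : {x // x ∈ s}, H i.1 := by
    rw [iSup_subtype]
  rw [htop, ← hrange]
  have e1 : Nat.card (Subgroup.noncommPiCoprod hcomm').range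
      = Nat.card (∀ i : {x // x ∈ s}, H i.1) :=
    (Nat.card_congr (MonoidHom.ofInjective hinj).toEquiv).symm
  rw [e1, Nat.card_pi, Finset.prod_coe_sort s (fun i => Nat.card (H i))]

lemma mem_of_forall_pow {s : Finset ι} {H : ι → Subgroup G}
    (hcomm : ∀ i ∈ s, ∀ j ∈ s, i ≠ j → ∀ x ∈ H i, ∀ y ∈ H j, Commute x y)
    (hcop : ∀ i ∈ s, ∀ j ∈ s, i ≠ j → Nat.Coprime (Nat.card (H i)) (Nat.card (H j)))
    (htop : (⨆ i ∈ s, H i) = ⊤) (K : Subgroup G) (g : G)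
    (hg : ∀ i ∈ s, ∀ n : ℕ, g ^ n ∈ H i → g ^ n ∈ K) : g ∈ K := by
  classical
  have hcomm' := pairwise_subtype hcomm
  set f := Subgroup.noncommPiCoprod hcomm' with hf
  have hrange := Subgroup.noncommPiCoprod_range (hcomm := hcomm')
  have hsurj : ∀ y : G, ∃ x, f x = y := by
    intro y
    have : y ∈ f.range := by
      have htop' : (⨆ i ∈ s, H i) = ⨆ i : {x // x ∈ s}, H i.1 := by rw [iSup_subtype]
      rw [hrange, ← htop', htop]
      exact Subgroup.mem_top y
    exact this
  obtain ⟨x, hx⟩ := hsurj g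
  set c : {i // i ∈ s} → ℕ := fun i => Nat.card (H i.1) with hc
  have hordc : ∀ j : {i // i ∈ s}, orderOf (x j) ∣ c j := fun j => orderOf_dvd_natCard (x j)
  -- CRT data
  have hP : ∀ i : {x // x ∈ s},
      (c i).Coprime (∏ j ∈ Finset.univ.erase i, c j) := by
    intro i
    refine Nat.Coprime.prod_right ?_
    intro j hj
    exact hcop i.1 i.2 j.1 j.2
      (fun e => (Finset.mem_erase.mp hj).1 (Subtype.ext e.symm))
  set n : {x // x ∈ s} → ℕ := fun i => (Nat.chineseRemainder (hP i) 1 0).1 with hn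
  have hn1 : ∀ i, n i ≡ 1 [MOD c i] := fun i => (Nat.chineseRemainder (hP i) 1 0).2.1
  have hn0 : ∀ i j, j ≠ i → c j ∣ n i := by
    intro i j hji
    have h1 : (∏ k ∈ Finset.univ.erase i, c k) ∣ n i :=
      (Nat.modEq_zero_iff_dvd).mp (Nat.chineseRemainder (hP i) 1 0).2.2
    exact dvd_trans (Finset.dvd_prod_of_mem c (by simp [hji])) h1
  -- each power lands in the corresponding subgroup
  have key1 : ∀ i : {x // x ∈ s}, g ^ n i = ((x i ^ n i : H i.1) : G) := by
    intro i
    have hx' : x ^ n i = Pi.mulSingle i (x i ^ n i) := by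
      funext j
      by_cases hji : j = i
      · subst hji; simp
      · have : (x j) ^ n i = 1 :=
          orderOf_dvd_iff_pow_eq_one.mp ((hordc j).trans (hn0 i j hji))
        simp [Pi.mulSingle, hji, Pi.pow_apply, this]
    calc g ^ n i = f (x ^ n i) := by rw [map_pow, hx]
    _ = ((x i ^ n i : H i.1) : G) := by
        rw [hx']; exact Subgroup.noncommPiCoprod_mulSingle i _
  have key2 : ∀ i : {x // x ∈ s}, g ^ n i ∈ K := by
    intro i
    refine hg i.1 i.2 (n i) ?_
    rw [key1 i]; exact (x i ^ n i).2
  -- the sum of the exponents is ≡ 1 mod every order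
  have key3 : g ^ (∑ i : {x // x ∈ s}, n i) = g := by
    have hxS : x ^ (∑ i : {x // x ∈ s}, n i) = x := by
      funext j
      have hmod : (∑ i : {x // x ∈ s}, n i) ≡ 1 [MOD c j] := by
        have hsplit : (∑ i : {x // x ∈ s}, n i)
            = n j + ∑ i ∈ Finset.univ.erase j, n i := by
          rw [Finset.add_sum_erase _ _ (Finset.mem_univ j)]
        rw [hsplit]
        have h2 : (∑ i ∈ Finset.univ.erase j, n i) ≡ 0 [MOD c j] := by
          rw [Nat.modEq_zero_iff_dvd]
          exact Finset.dvd_sum fun i hi =>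
            hn0 i j (fun e => (Finset.mem_erase.mp hi).1 e.symm)
        simpa using (hn1 j).add h2
      have : (x j) ^ (∑ i : {x // x ∈ s}, n i) = (x j) ^ 1 :=
        pow_eq_pow_iff_modEq.mpr (hmod.of_dvd (hordc j))
      simpa using this
    calc g ^ (∑ i : {x // x ∈ s}, n i) = f (x ^ (∑ i : {x // x ∈ s}, n i)) := by
          rw [map_pow, hx]
    _ = g := by rw [hxS, hx]
  -- conclude
  have hsum : ∀ T : Finset {x // x ∈ s}, g ^ (∑ i ∈ T, n i) ∈ K := by
    intro T
    induction T using Finset.induction with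
    | empty => simpa using K.one_mem
    | @insert a T ha ih =>
        rw [Finset.sum_insert ha, pow_add]
        exact K.mul_mem (key2 a) ih
  have := hsum Finset.univ
  rwa [key3] at this

end Decomp

/-! ### Quotient inheritance -/

section Quotient

variable {ι : Type*} {G : Type*} [Group G]

lemma sigmaNilpotent_quotient {σ : ι → Set ℕ} [Finite G] (h : SigmaNilpotent σ G)
    (N : Subgroup G) [N.Normal] : SigmaNilpotent σ (G ⧸ N) := by
  intro Hq Kq hchief
  obtain ⟨hHq, hKq, hlt, hmax⟩ := hchief
  set f := QuotientGroup.mk' N with hfdef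
  have hfs : Function.Surjective f := QuotientGroup.mk'_surjective N
  set H := Hq.comap f with hHdef
  set K := Kq.comap f with hKdef
  have hHn : H.Normal := hHq.comap f
  have hKn : K.Normal := hKq.comap f
  have hKH : K ≤ H := Subgroup.comap_mono hlt.le
  have hkerK : f.ker ≤ K := Subgroup.ker_le_comap f Kq
  have hchief' : IsChiefFactor H K := by
    refine ⟨hHn, hKn, lt_of_le_of_ne hKH ?_, ?_⟩
    · intro e
      exact hlt.ne (Subgroup.comap_injective hfs e)
    · intro L hLn hKL hLH
      have hkerL : f.ker ≤ L := hkerK.trans hKL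
      have hLmapn : (Subgroup.map f L).Normal := Subgroup.Normal.map hLn f hfs
      have h1 : Kq ≤ Subgroup.map f L := by
        rw [← Subgroup.map_comap_eq_self_of_surjective hfs Kq]
        exact Subgroup.map_mono hKL
      have h2 : Subgroup.map f L ≤ Hq := by
        rw [← Subgroup.map_comap_eq_self_of_surjective hfs Hq]
        exact Subgroup.map_mono hLH
      rcases hmax (Subgroup.map f L) hLmapn h1 h2 with h3 | h3
      · left; rw [← Subgroup.comap_map_eq_self hkerL, h3]
      · right; rw [← Subgroup.comap_map_eq_self hkerL, h3]
  obtain ⟨i, hi⟩ := h H K hchief'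
  refine ⟨i, primaryIn_of_dvd hi (mul_dvd_mul ?_ ?_)⟩
  · have e1 : Nat.card Hq / Nat.card Kq = Kq.relIndex Hq := card_div_card_eq_relindex hlt.le
    have e2 : Nat.card H / Nat.card K = K.relIndex H := card_div_card_eq_relindex hKH
    have e3 : K.relIndex H = Kq.relIndex Hq := by
      rw [hKdef, hHdef, Subgroup.relIndex_comap,
        Subgroup.map_comap_eq_self_of_surjective hfs]
    rw [e1, e2, e3]
  · rw [card_div_chiefCentralizer Hq Kq hHq hKq, card_div_chiefCentralizer H K hHn hKn]
    have hCle : chiefCent H K hHn hKn ≤ (chiefCent Hq Kq hHq hKq).comap f := by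
      intro g hg
      intro hq hhq
      obtain ⟨hh, rfl⟩ := hfs hq
      have hmem : hh ∈ H := hhq
      have hgk := hg hh hmem
      show f g * f hh * (f g)⁻¹ * (f hh)⁻¹ ∈ Kq
      have : f g * f hh * (f g)⁻¹ * (f hh)⁻¹ = f (g * hh * g⁻¹ * hh⁻¹) := by
        simp [map_mul, map_inv]
      rw [this]
      exact hgk
    calc (chiefCent Hq Kq hHq hKq).index
        = ((chiefCent Hq Kq hHq hKq).comap f).index :=
          (Subgroup.index_comap_of_surjective _ hfs).symm
    _ ∣ (chiefCent H K hHn hKn).index := Subgroup.index_dvd_of_le hCle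

end Quotient

/-! ### Minimal normal subgroups -/

section MinNormal

variable {ι : Type*} {G : Type*} [Group G]

lemma exists_isMinimalNormal [Finite G] (h : Nontrivial G) :
    ∃ N : Subgroup G, IsMinimalNormal N := by
  classical
  have hS : ({N : Subgroup G | N.Normal ∧ N ≠ ⊥}).Nonempty := by
    refine ⟨⊤, ⟨inferInstance, ?_⟩⟩
    intro e
    obtain ⟨x, y, hxy⟩ := h
    have hx : x ∈ (⊤ : Subgroup G) := Subgroup.mem_top x
    have hy : y ∈ (⊤ : Subgroup G) := Subgroup.mem_top y
    rw [e, Subgroup.mem_bot] at hx hy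
    exact hxy (hx.trans hy.symm)
  obtain ⟨N, hN, hmin⟩ : ∃ N ∈ {N : Subgroup G | N.Normal ∧ N ≠ ⊥},
      ∀ L ∈ {N : Subgroup G | N.Normal ∧ N ≠ ⊥}, L ≤ N → N = L := by
    obtain ⟨N, hNm⟩ := (Set.toFinite {N : Subgroup G | N.Normal ∧ N ≠ ⊥}).exists_minimal hS
    exact ⟨N, hNm.prop, fun L hL hLN => hNm.eq_of_ge hL hLN⟩
  refine ⟨N, hN.1, hN.2, ?_⟩
  intro L hLn hLN
  by_cases hLbot : L = ⊥
  · exact Or.inl hLbot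
  · exact Or.inr (hmin L ⟨hLn, hLbot⟩ hLN).symm

lemma isChiefFactor_of_minimal {N : Subgroup G} (hN : IsMinimalNormal N) :
    IsChiefFactor N ⊥ :=
  ⟨hN.1, botNormal, bot_lt_iff_ne_bot.mpr hN.2.1,
    fun L hLn _ hLN => hN.2.2 L hLn hLN⟩

lemma min_normal_info {σ : ι → Set ℕ} [Finite G] (hG : SigmaNilpotent σ G) {N : Subgroup G}
    (hN : IsMinimalNormal N) :
    ∃ j, (∀ p, p.Prime → p ∣ Nat.card N → p ∈ σ j) ∧
      (∀ p, p.Prime → p ∣ (chiefCent N ⊥ hN.1 botNormal).index → p ∈ σ j) := by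
  obtain ⟨j, hj⟩ := hG N ⊥ (isChiefFactor_of_minimal hN)
  have e : (Nat.card N / Nat.card (⊥ : Subgroup G)) *
      (Nat.card G / Nat.card (chiefCentralizer N ⊥))
      = Nat.card N * (chiefCent N ⊥ hN.1 botNormal).index := by
    rw [Subgroup.card_bot, Nat.div_one, card_div_chiefCentralizer N ⊥ hN.1 botNormal]
  rw [e] at hj
  exact ⟨j, fun p pp pd => hj p pp (pd.mul_right _), fun p pp pd => hj p pp (pd.mul_left _)⟩

end MinNormal

/-! ### Existence of normal Hall subgroups (forward direction) -/

section Forward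

universe u

variable {ι : Type*}

theorem exists_normal_hall (σ : ι → Set ℕ) (hσ : IsPrimePartition σ) :
    ∀ (n : ℕ) (G : Type u) [Group G] [Finite G], Nat.card G ≤ n → SigmaNilpotent σ G →
      ∀ i, ∃ H : Subgroup G, H.Normal ∧ IsHall (σ i) H := by
  intro n
  induction n with
  | zero =>
      intro G _ _ hle _ _
      exact absurd hle (by have := Nat.card_pos (α := G); omega)
  | succ n ih =>
      intro G _ _ hle hnil i
      by_cases htriv : Subsingleton G
      · refine ⟨⊥, botNormal, ?_, ?_⟩
        · intro p pp hd
          rw [Subgroup.card_bot] at hd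
          exact absurd (Nat.eq_one_of_dvd_one hd) pp.ne_one
        · intro p pp hd
          rw [Subgroup.index_bot] at hd
          have : Nat.card G = 1 := Nat.card_eq_one_iff_unique.mpr ⟨⟨htriv.allEq⟩, ⟨1⟩⟩
          rw [this] at hd
          exact absurd (Nat.eq_one_of_dvd_one hd) pp.ne_one
      · have hnontriv : Nontrivial G := not_subsingleton_iff_nontrivial.mp htriv
        obtain ⟨N, hN⟩ := exists_isMinimalNormal hnontriv
        haveI hNn : N.Normal := hN.1
        obtain ⟨j, hjN, hjC⟩ := min_normal_info hnil hN
        have hcardq : Nat.card (G ⧸ N) ≤ n := by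
          have h1 : Nat.card G = Nat.card (G ⧸ N) * Nat.card N :=
            Subgroup.card_eq_card_quotient_mul_card_subgroup N
          have h2 : 1 < Nat.card N := (Subgroup.one_lt_card_iff_ne_bot N).mpr hN.2.1
          have h3 : 0 < Nat.card (G ⧸ N) := Nat.card_pos
          nlinarith
        have hnilq := sigmaNilpotent_quotient hnil N
        obtain ⟨Mq, hMqn, hMqhall⟩ := ih (G ⧸ N) hcardq hnilq i
        set f := QuotientGroup.mk' N with hfdef
        have hfs : Function.Surjective f := QuotientGroup.mk'_surjective N
        set M := Mq.comap f with hMdef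
        haveI hMn : M.Normal := hMqn.comap f
        have hMidx : M.index = Mq.index := Subgroup.index_comap_of_surjective Mq hfs
        have hNM : N ≤ M := by
          have := Subgroup.ker_le_comap f Mq
          rwa [QuotientGroup.ker_mk'] at this
        have hcardM : Nat.card M = Nat.card N * Nat.card Mq := by
          have h1 : Nat.card M * M.index = Nat.card G := Subgroup.card_mul_index M
          have h2 : Nat.card Mq * Mq.index = Nat.card (G ⧸ N) := Subgroup.card_mul_index Mq
          have h3 : Nat.card G = Nat.card (G ⧸ N) * Nat.card N :=
            Subgroup.card_eq_card_quotient_mul_card_subgroup N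
          have h4 : 0 < M.index := Nat.pos_of_ne_zero Subgroup.index_ne_zero_of_finite
          have h5 : Nat.card M * M.index = (Nat.card N * Nat.card Mq) * M.index := by
            rw [h1, h3, ← h2, hMidx]; ring
          exact Nat.eq_of_mul_eq_mul_right h4 h5
        by_cases hNi : ∀ p, p.Prime → p ∣ Nat.card N → p ∈ σ i
        · refine ⟨M, hMn, ?_, ?_⟩
          · intro p pp hd
            rw [hcardM] at hd
            rcases (Nat.Prime.dvd_mul pp).mp hd with h | h
            · exact hNi p pp h
            · exact hMqhall.1 p pp h
          · intro p pp hd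
            rw [hMidx] at hd
            exact hMqhall.2 p pp hd
        · push_neg at hNi
          obtain ⟨q, hq, hqd, hqn⟩ := hNi
          have hij : i ≠ j := fun e => hqn (e ▸ hjN q hq hqd)
          haveI : (N.subgroupOf M).Normal := Subgroup.normal_subgroupOf
          have hcards : Nat.card (N.subgroupOf M) = Nat.card N :=
            Nat.card_congr (Subgroup.subgroupOfEquivOfLe hNM).toEquiv
          have hidx : (N.subgroupOf M).index = Nat.card Mq := by
            have h1 : Nat.card (N.subgroupOf M) * (N.subgroupOf M).index = Nat.card M :=
              Subgroup.card_mul_index _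
            rw [hcards, hcardM] at h1
            exact Nat.eq_of_mul_eq_mul_left Nat.card_pos h1
          have hcop : (Nat.card (N.subgroupOf M)).Coprime ((N.subgroupOf M).index) := by
            rw [hcards, hidx]
            exact coprime_of_primary hσ (Ne.symm hij) hjN hMqhall.1
          obtain ⟨Ksub, hKsub⟩ := Subgroup.exists_right_complement'_of_coprime hcop
          set U := Ksub.map M.subtype with hUdef
          have hUle : U ≤ M := Subgroup.map_subtype_le Ksub
          have hcardU : Nat.card U = Nat.card Mq := by
            have h1 : Nat.card (N.subgroupOf M) * Nat.card Ksub = Nat.card M := hKsub.card_mul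
            have h2 : Nat.card U = Nat.card Ksub :=
              Nat.card_congr (Subgroup.equivMapOfInjective Ksub M.subtype
                M.subtype_injective).symm.toEquiv
            rw [hcards, hcardM] at h1
            rw [h2]
            exact (Nat.eq_of_mul_eq_mul_left Nat.card_pos h1)
          have hUprimes : ∀ p, p.Prime → p ∣ Nat.card U → p ∈ σ i := by
            intro p pp hd
            rw [hcardU] at hd
            exact hMqhall.1 p pp hd
          set C := chiefCent N ⊥ hNn botNormal with hCdef
          haveI hCn : C.Normal := chiefCent_normal N ⊥ hNn botNormal
          have hUC : U ≤ C := by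
            have h1 : C.relIndex U ∣ C.index := Subgroup.relIndex_dvd_index_of_normal C U
            have h2 : C.relIndex U ∣ Nat.card U := relindex_dvd_card
            have h3 : Nat.Coprime (Nat.card U) C.index :=
              coprime_of_primary hσ hij hUprimes hjC
            have h4 : C.relIndex U = 1 := Nat.eq_one_of_dvd_coprimes h3 h2 h1
            exact Subgroup.relIndex_eq_one.mp h4
          have hUcomm : ∀ u ∈ U, ∀ m ∈ N, Commute u m := by
            intro u hu m hm
            have h0 := hUC hu m hm
            have h1 : u * m * u⁻¹ * m⁻¹ = 1 := by
              simpa [Subgroup.mem_bot] using h0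
            exact commutatorElement_eq_one_iff_commute.mp h1
          have hcopNU : Nat.Coprime (Nat.card N) (Nat.card U) :=
            coprime_of_primary hσ (Ne.symm hij) hjN hUprimes
          have hinfNU : N ⊓ U = ⊥ := Subgroup.inf_eq_bot_of_coprime hcopNU
          have hUnorm : U.Normal := by
            constructor
            intro u hu g
            have hgM : g * u * g⁻¹ ∈ M := hMn.conj_mem u (hUle hu) g
            obtain ⟨⟨n1, k1⟩, hnk, -⟩ := hKsub.existsUnique (⟨g * u * g⁻¹, hgM⟩ : M)
            have hnk' : ((n1 : M) : G) * ((k1 : M) : G) = g * u * g⁻¹ := by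
              have := congrArg (fun x : M => (x : G)) hnk
              simpa using this
            have ha : ((n1 : M) : G) ∈ N := Subgroup.mem_subgroupOf.mp n1.2
            have hb : ((k1 : M) : G) ∈ U := ⟨(k1 : M), k1.2, rfl⟩
            have hab : Commute ((n1 : M) : G) ((k1 : M) : G) :=
              (hUcomm _ hb _ ha).symm
            -- show the N-part is trivial
            set a : G := ((n1 : M) : G)
            set b : G := ((k1 : M) : G)
            have haT : a ^ orderOf u = 1 := by
              have hw : (g * u * g⁻¹) ^ orderOf u = 1 := by
                rw [conj_pow, pow_orderOf_eq_one]
                simp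
              rw [← hnk', hab.mul_pow] at hw
              have hbinv : a ^ orderOf u = (b ^ orderOf u)⁻¹ := by
                rw [eq_inv_iff_mul_eq_one]
                exact hw
              have hmem : a ^ orderOf u ∈ N ⊓ U := by
                constructor
                · exact N.pow_mem ha _
                · rw [hbinv]; exact U.inv_mem (U.pow_mem hb _)
              rw [hinfNU] at hmem
              simpa [Subgroup.mem_bot] using hmem
            have horda : orderOf a ∣ Nat.card N := by
              have h1 : orderOf (⟨a, ha⟩ : N) ∣ Nat.card N := orderOf_dvd_natCard _
              rwa [← Subgroup.orderOf_coe (⟨a, ha⟩ : N)] at h1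
            have hordaU : orderOf a ∣ Nat.card U := by
              have h1 : orderOf a ∣ orderOf u := orderOf_dvd_of_pow_eq_one haT
              have h2 : orderOf u ∣ Nat.card U := by
                have h := orderOf_dvd_natCard (⟨u, hu⟩ : U)
                rw [← Subgroup.orderOf_coe (⟨u, hu⟩ : U)] at h
                simpa using h
              exact h1.trans h2
            have ha1 : a = 1 := by
              have := Nat.eq_one_of_dvd_coprimes hcopNU horda hordaU
              rwa [orderOf_eq_one_iff] at this
            have : g * u * g⁻¹ = b := by rw [← hnk', ha1, one_mul]
            rw [this]
            exact hb
          refine ⟨U, hUnorm, hUprimes, ?_⟩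
          -- index condition
          have hUrel : U.relIndex M = Nat.card N := by
            have h1 : Nat.card (U.subgroupOf M) * (U.subgroupOf M).index = Nat.card M :=
              Subgroup.card_mul_index _
            have h2 : Nat.card (U.subgroupOf M) = Nat.card U :=
              Nat.card_congr (Subgroup.subgroupOfEquivOfLe hUle).toEquiv
            rw [h2, hcardM, hcardU] at h1
            have h3 : Nat.card Mq * (U.subgroupOf M).index
                = Nat.card Mq * Nat.card N := by rw [h1]; ring
            exact Nat.eq_of_mul_eq_mul_left Nat.card_pos h3
          have hUidx : U.index = Nat.card N * M.index := by
            rw [← Subgroup.relIndex_mul_index hUle, hUrel]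
          intro p pp hd
          rw [hUidx] at hd
          rcases (Nat.Prime.dvd_mul pp).mp hd with h | h
          · exact hσ.not_mem (Ne.symm hij) (hjN p pp h)
          · rw [hMidx] at h
            exact hMqhall.2 p pp h

end Forward

/-! ### The main theorem -/

/-- `G` is σ-nilpotent iff `G` is the internal direct product of a complete Hall
σ-set `{H i | i ∈ s}`, where `s` corresponds exactly to `σ(G)`. -/
theorem sigmaNilpotent_iff_internal_direct_product_of_hall
    {ι : Type*} [DecidableEq ι] (σ : ι → Set ℕ) (hσ : IsPrimePartition σ)
    (G : Type*) [Group G] [Finite G] :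
    SigmaNilpotent σ G ↔
      ∃ (s : Finset ι) (H : ι → Subgroup G),
        (∀ i, i ∈ s ↔ MemSigma σ i G) ∧
        (∀ i ∈ s, IsHall (σ i) (H i) ∧ (H i).Normal) ∧
        (∀ i ∈ s, ∀ j ∈ s, i ≠ j → ∀ x ∈ H i, ∀ y ∈ H j, Commute x y) ∧
        (⨆ i ∈ s, H i) = ⊤ ∧
        (∀ i ∈ s, H i ⊓ (⨆ j ∈ s.erase i, H j) = ⊥) := by
  classical
  constructor
  · -- forward direction
    intro hnil
    have hfin : ({i : ι | MemSigma σ i G}).Finite := by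
      have hsub : {i : ι | MemSigma σ i G} ⊆
          ⋃ p ∈ (Nat.card G).primeFactors, {i : ι | p ∈ σ i} := by
        intro i ⟨p, pp, hpσ, hpd⟩
        have hp0 : Nat.card G ≠ 0 := Nat.card_pos.ne'
        exact Set.mem_biUnion (Nat.mem_primeFactors.mpr ⟨pp, hpd, hp0⟩) hpσ
      refine Set.Finite.subset (Set.Finite.biUnion ?_ ?_) hsub
      · exact (Nat.card G).primeFactors.finite_toSet
      · intro p hp
        have pp : p.Prime := Nat.prime_of_mem_primeFactors hp
        obtain ⟨k, -, hk⟩ := hσ.2 p pp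
        refine Set.Subsingleton.finite ?_
        intro a ha b hb
        exact (hk a ha).trans (hk b hb).symm
    set s : Finset ι := hfin.toFinset with hsdef
    have hmem : ∀ i, i ∈ s ↔ MemSigma σ i G := fun i => hfin.mem_toFinset
    have hex : ∀ i, ∃ H : Subgroup G, H.Normal ∧ IsHall (σ i) H := fun i =>
      exists_normal_hall σ hσ (Nat.card G) G le_rfl hnil i
    set H : ι → Subgroup G := fun i => (hex i).choose with hHdef
    have hHn : ∀ i, (H i).Normal := fun i => (hex i).choose_spec.1
    have hHhall : ∀ i, IsHall (σ i) (H i) := fun i => (hex i).choose_spec.2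
    have hcop : ∀ i j, i ≠ j → Nat.Coprime (Nat.card (H i)) (Nat.card (H j)) :=
      fun i j hij => coprime_of_primary hσ hij (hHhall i).1 (hHhall j).1
    have hcomm : ∀ i ∈ s, ∀ j ∈ s, i ≠ j → ∀ x ∈ H i, ∀ y ∈ H j, Commute x y := by
      intro i _ j _ hij x hx y hy
      exact Subgroup.commute_of_normal_of_disjoint _ _ (hHn i) (hHn j)
        (Subgroup.disjoint_def.mpr (fun {z} hzi hzj => by
          have : z ∈ H i ⊓ H j := ⟨hzi, hzj⟩
          rw [Subgroup.inf_eq_bot_of_coprime (hcop i j hij)] at this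
          simpa [Subgroup.mem_bot] using this)) x y hx hy
    have hG0 : Nat.card G ≠ 0 := Nat.card_pos.ne'
    have hprod0 : (∏ i ∈ s, Nat.card (H i)) ≠ 0 := by
      refine Finset.prod_ne_zero_iff.mpr fun i _ => Nat.card_pos.ne'
    have hdvd1 : Nat.card G ∣ ∏ i ∈ s, Nat.card (H i) := by
      rw [← Nat.factorization_le_iff_dvd hG0 hprod0]
      intro p
      by_cases hp : p.Prime
      · by_cases hpd : p ∣ Nat.card G
        · obtain ⟨k, hk, -⟩ := hσ.2 p hp
          have hks : k ∈ s := (hmem k).mpr ⟨p, hp, hk, hpd⟩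
          have hpow : p ^ (Nat.card G).factorization p ∣ Nat.card (H k) := by
            have h1 : p ^ (Nat.card G).factorization p ∣ Nat.card G := Nat.ordProj_dvd _ _
            have h2 : ¬ p ∣ (H k).index := by
              intro h3
              exact (hHhall k).2 p hp h3 hk
            have h4 : Nat.Coprime (p ^ (Nat.card G).factorization p) ((H k).index) :=
              Nat.Coprime.pow_left _ ((Nat.Prime.coprime_iff_not_dvd hp).mpr h2)
            have h5 : p ^ (Nat.card G).factorization p
                ∣ Nat.card (H k) * (H k).index := by
              rw [Subgroup.card_mul_index]; exact h1
            exact h4.dvd_of_dvd_mul_right h5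
          have h6 : p ^ (Nat.card G).factorization p ∣ ∏ i ∈ s, Nat.card (H i) :=
            hpow.trans (Finset.dvd_prod_of_mem _ hks)
          exact (Nat.Prime.pow_dvd_iff_le_factorization hp hprod0).mp h6
        · simp [Nat.factorization_eq_zero_of_not_dvd hpd]
      · simp [Nat.factorization_eq_zero_of_not_prime _ hp]
    have hcop' : ∀ i ∈ s, ∀ j ∈ s, i ≠ j →
        Nat.Coprime (Nat.card (H i)) (Nat.card (H j)) := fun i _ j _ hij => hcop i j hij
    have hcardsup : Nat.card (⨆ i ∈ s, H i : Subgroup G) = ∏ i ∈ s, Nat.card (H i) :=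
      card_biSup hcomm hcop'
    have hdvd2 : Nat.card (⨆ i ∈ s, H i : Subgroup G) ∣ Nat.card G :=
      Subgroup.card_subgroup_dvd_card _
    have htopcard : Nat.card (⨆ i ∈ s, H i : Subgroup G) = Nat.card G := by
      rw [hcardsup] at hdvd2 ⊢
      exact Nat.dvd_antisymm hdvd2 hdvd1
    have htop : (⨆ i ∈ s, H i) = ⊤ := Subgroup.eq_top_of_card_eq _ htopcard
    refine ⟨s, H, hmem, fun i _ => ⟨hHhall i, hHn i⟩, hcomm, htop, ?_⟩
    intro i hi
    have hcomm2 : ∀ a ∈ s.erase i, ∀ b ∈ s.erase i, a ≠ b →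
        ∀ x ∈ H a, ∀ y ∈ H b, Commute x y := by
      intro a ha b hb hab
      exact hcomm a (Finset.mem_of_mem_erase ha) b (Finset.mem_of_mem_erase hb) hab
    have hcop2 : ∀ a ∈ s.erase i, ∀ b ∈ s.erase i, a ≠ b →
        Nat.Coprime (Nat.card (H a)) (Nat.card (H b)) := fun a _ b _ hab => hcop a b hab
    have hcardD : Nat.card (⨆ j ∈ s.erase i, H j : Subgroup G)
        = ∏ j ∈ s.erase i, Nat.card (H j) := card_biSup hcomm2 hcop2
    have hcopD : Nat.Coprime (Nat.card (H i))
        (Nat.card (⨆ j ∈ s.erase i, H j : Subgroup G)) := by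
      rw [hcardD]
      refine Nat.Coprime.prod_right ?_
      intro j hj
      exact hcop i j (fun e => (Finset.mem_erase.mp hj).1 e.symm)
    exact Subgroup.inf_eq_bot_of_coprime hcopD
  · -- backward direction
    rintro ⟨s, H, hmem, hhall, hcomm, htop, -⟩
    intro F K hchief
    obtain ⟨hFn, hKn, hlt, hmax⟩ := hchief
    haveI : K.Normal := hKn
    haveI : F.Normal := hFn
    have hcop : ∀ i ∈ s, ∀ j ∈ s, i ≠ j →
        Nat.Coprime (Nat.card (H i)) (Nat.card (H j)) := fun i hi j hj hij =>
      coprime_of_primary hσ hij ((hhall i hi).1).1 ((hhall j hj).1).1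
    -- find the index i such that F = (F ⊓ H i) ⊔ K
    have hstep : ∃ i ∈ s, (F ⊓ H i) ⊔ K = F := by
      by_contra hcon
      push_neg at hcon
      have hall_K : ∀ i ∈ s, (F ⊓ H i) ⊔ K = K := by
        intro i hi
        have hNin : ((F ⊓ H i) ⊔ K).Normal := by
          haveI h1 : (F ⊓ H i).Normal :=
            ⟨fun x hx g => ⟨hFn.conj_mem _ hx.1 g, ((hhall i hi).2).conj_mem _ hx.2 g⟩⟩
          exact Subgroup.sup_normal _ _
        have h2 : K ≤ (F ⊓ H i) ⊔ K := le_sup_right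
        have h3 : (F ⊓ H i) ⊔ K ≤ F := sup_le inf_le_left hlt.le
        rcases hmax _ hNin h2 h3 with h4 | h4
        · exact h4
        · exact absurd h4 (hcon i hi)
      have hFK : F ≤ K := by
        intro g hg
        refine mem_of_forall_pow hcomm hcop htop K g ?_
        intro i hi m hm
        have h5 : g ^ m ∈ F ⊓ H i := ⟨F.pow_mem hg m, hm⟩
        have h6 : g ^ m ∈ (F ⊓ H i) ⊔ K :=
          (le_sup_left : F ⊓ H i ≤ (F ⊓ H i) ⊔ K) h5
        rwa [hall_K i hi] at h6
      exact hlt.not_ge hFK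
    obtain ⟨i, hi, hFi⟩ := hstep
    refine ⟨i, ?_⟩
    intro p pp hpd
    rcases (Nat.Prime.dvd_mul pp).mp hpd with hcase | hcase
    · -- p divides |F|/|K|
      have e1 : Nat.card F / Nat.card K = K.relIndex F := card_div_card_eq_relindex hlt.le
      have e2 : K.relIndex F = K.relIndex (F ⊓ H i) := by
        conv_lhs => rw [← hFi]
        exact Subgroup.relIndex_sup_right _ _
      have e3 : K.relIndex (F ⊓ H i) ∣ Nat.card (H i) :=
        (relindex_dvd_card).trans (Subgroup.card_dvd_of_le inf_le_right)
      rw [e1, e2] at hcase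
      exact ((hhall i hi).1).1 p pp (hcase.trans e3)
    · -- p divides |G|/|C|
      rw [card_div_chiefCentralizer F K hFn hKn] at hcase
      set C := chiefCent F K hFn hKn with hCdef
      set D : Subgroup G := ⨆ j ∈ s.erase i, H j with hDdef
      have hDC : D ≤ C := by
        refine iSup_le fun j => iSup_le fun hj => ?_
        intro x hx
        intro h hh
        rw [← hFi] at hh
        have hh' : h ∈ (↑((F ⊓ H i) ⊔ K) : Set G) := hh
        rw [Subgroup.mul_normal (F ⊓ H i) K] at hh'
        obtain ⟨a, ha, k, hk, rfl⟩ := hh' 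
        have hxa : x * a = a * x :=
          hcomm j (Finset.mem_of_mem_erase hj) i hi (Finset.mem_erase.mp hj).1
            x hx a ha.2
        have key : x * (a * k) * x⁻¹ * (a * k)⁻¹
            = (x * a * x⁻¹ * a⁻¹) * (a * (x * k * x⁻¹ * k⁻¹) * a⁻¹) := by group
        have hone : x * a * x⁻¹ * a⁻¹ = 1 := by
          rw [hxa]; group
        rw [key, hone, one_mul]
        exact hKn.conj_mem _ (by
          have : x * k * x⁻¹ ∈ K := hKn.conj_mem k hk x
          exact K.mul_mem this (K.inv_mem hk)) a
      have hidxC : C.index ∣ D.index := Subgroup.index_dvd_of_le hDC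
      -- D.index = Nat.card (H i)
      have hcomm2 : ∀ a ∈ s.erase i, ∀ b ∈ s.erase i, a ≠ b →
          ∀ x ∈ H a, ∀ y ∈ H b, Commute x y := by
        intro a ha b hb hab
        exact hcomm a (Finset.mem_of_mem_erase ha) b (Finset.mem_of_mem_erase hb) hab
      have hcop2 : ∀ a ∈ s.erase i, ∀ b ∈ s.erase i, a ≠ b →
          Nat.Coprime (Nat.card (H a)) (Nat.card (H b)) := fun a ha b hb hab =>
        hcop a (Finset.mem_of_mem_erase ha) b (Finset.mem_of_mem_erase hb) hab
      have hcardD : Nat.card D = ∏ j ∈ s.erase i, Nat.card (H j) :=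
        card_biSup hcomm2 hcop2
      have hcardG : Nat.card G = ∏ j ∈ s, Nat.card (H j) := by
        have h1 : Nat.card (⨆ j ∈ s, H j : Subgroup G) = ∏ j ∈ s, Nat.card (H j) :=
          card_biSup hcomm (fun a ha b hb hab => hcop a ha b hb hab)
        rw [htop] at h1
        rw [← h1]
        exact (Nat.card_congr Subgroup.topEquiv.toEquiv).symm
      have hDidx : D.index = Nat.card (H i) := by
        have h1 : Nat.card D * D.index = Nat.card G := Subgroup.card_mul_index D
        rw [hcardD, hcardG, ← Finset.mul_prod_erase s _ hi] at h1
        have h2 : (∏ j ∈ s.erase i, Nat.card (H j)) * D.index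
            = (∏ j ∈ s.erase i, Nat.card (H j)) * Nat.card (H i) := by
          rw [h1]; ring
        exact Nat.eq_of_mul_eq_mul_left
          (Nat.pos_of_ne_zero (Finset.prod_ne_zero_iff.mpr fun j _ => Nat.card_pos.ne')) h2
      rw [hDidx] at hidxC
      exact ((hhall i hi).1).1 p pp (hcase.trans hidxC)
end

section
/- Let A and B be subgroups of a finite group G such that G ≠ AB and AB^x = B^xA for all x ∈ G. Then G has a proper normal subgroup N such that A ≤ N or B ≤ N. -/
open Pointwise

section KegelAux

open Subgroup

variable {G : Type*} [Group G]

/-- conjugation as a monoid hom -/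
private abbrev cjK (g : G) : G →* G := (MulAut.conj g).toMonoidHom

private lemma cjK_apply (g x : G) : cjK g x = g * x * g⁻¹ := rfl

private lemma cjK_comp (h g : G) : (cjK h).comp (cjK g) = cjK (h * g) := by
  ext x
  simp only [MonoidHom.coe_comp, Function.comp_apply, cjK_apply, mul_inv_rev]
  group

private lemma cmap_cmap (X : Subgroup G) (h g : G) :
    (X.map (cjK g)).map (cjK h) = X.map (cjK (h * g)) := by
  rw [Subgroup.map_map, cjK_comp]

private lemma cmap_one (X : Subgroup G) : X.map (cjK 1) = X := by
  ext x
  simp [Subgroup.mem_map, cjK_apply]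

private lemma cmap_self (X : Subgroup G) {x : G} (hx : x ∈ X) : X.map (cjK x) = X := by
  ext y
  simp only [Subgroup.mem_map, cjK_apply]
  constructor
  · rintro ⟨z, hz, rfl⟩
    exact mul_mem (mul_mem hx hz) (inv_mem hx)
  · intro hy
    refine ⟨x⁻¹ * y * x, mul_mem (mul_mem (inv_mem hx) hy) hx, ?_⟩
    group

private lemma cjK_inj (g : G) : Function.Injective (cjK g) := by
  intro a b hab
  simpa [cjK_apply, mul_left_cancel_iff, mul_right_cancel_iff] using hab

private lemma card_cmap (X : Subgroup G) (g : G) :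
    Nat.card (X.map (cjK g)) = Nat.card X :=
  (Nat.card_congr (X.equivMapOfInjective (cjK g) (cjK_inj g)).toEquiv).symm

private lemma sg_eq_of_le_card [Finite G] {H K : Subgroup G} (h : H ≤ K)
    (hc : Nat.card K ≤ Nat.card H) : H = K := by
  apply SetLike.ext'
  apply Set.eq_of_subset_of_ncard_le h
  rwa [← Nat.card_coe_set_eq, ← Nat.card_coe_set_eq]

private lemma cmap_eq_iff_mem_normalizer {X : Subgroup G} {c : G} :
    X.map (cjK c) = X ↔ c ∈ Subgroup.normalizer (X : Set G) := by
  constructor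
  · intro h
    rw [Subgroup.mem_normalizer_iff]
    intro y
    constructor
    · intro hy
      rw [← h]
      exact ⟨y, hy, rfl⟩
    · intro hy
      rw [← h] at hy
      obtain ⟨z, hz, hez⟩ := hy
      have : z = y := cjK_inj c hez
      rwa [← this]
  · intro hc
    ext y
    rw [Subgroup.mem_normalizer_iff] at hc
    constructor
    · rintro ⟨z, hz, rfl⟩
      exact (hc z).1 hz
    · intro hy
      exact ⟨c⁻¹ * y * c, by
        have := (hc (c⁻¹ * y * c)).2
        apply this
        have : c * (c⁻¹ * y * c) * c⁻¹ = y := by group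
        rwa [this], by rw [cjK_apply]; group⟩

/-- the subgroup generated by the conjugates `B^y`, `y ∈ t` -/
private def XsK (B : Subgroup G) (t : Set G) : Subgroup G := ⨆ y ∈ t, B.map (cjK y)

private lemma Bc_le_XsK {B : Subgroup G} {t : Set G} {y : G} (hy : y ∈ t) :
    B.map (cjK y) ≤ XsK B t := le_iSup₂ (f := fun y (_ : y ∈ t) => B.map (cjK y)) y hy

private lemma map_XsK (B : Subgroup G) (t : Set G) (h : G) :
    (XsK B t).map (cjK h) = XsK B ((h * ·) '' t) := by
  unfold XsK
  rw [iSup_image]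
  rw [(Subgroup.gc_map_comap (cjK h)).l_iSup]
  refine iSup_congr fun y => ?_
  rw [(Subgroup.gc_map_comap (cjK h)).l_iSup]
  refine iSup_congr fun hy => ?_
  rw [cmap_cmap]

private lemma XsK_biUnion (B : Subgroup G) {ι : Type*} (s : Set ι) (u : ι → Set G) :
    XsK B (⋃ i ∈ s, u i) = ⨆ i ∈ s, XsK B (u i) := by
  unfold XsK
  rw [iSup_iUnion]
  refine iSup_congr fun i => ?_
  rw [iSup_iUnion]

private lemma push_lemma (A B : Subgroup G)
    (hperm : ∀ x : G, (A : Set G) * (B.map (cjK x) : Set G) =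
      (B.map (cjK x) : Set G) * (A : Set G)) (t : Set G) :
    (A : Set G) * (XsK B t : Set G) = (XsK B t : Set G) * (A : Set G) := by
  have main : ∀ w ∈ XsK B t,
      (∀ a ∈ A, ∃ w' ∈ XsK B t, ∃ a' ∈ A, a * w = w' * a') ∧
      (∀ a ∈ A, ∃ a' ∈ A, ∃ w' ∈ XsK B t, w * a = a' * w') := by
    intro w hw
    refine Subgroup.iSup_induction
      (C := fun w => (∀ a ∈ A, ∃ w' ∈ XsK B t, ∃ a' ∈ A, a * w = w' * a') ∧
        (∀ a ∈ A, ∃ a' ∈ A, ∃ w' ∈ XsK B t, w * a = a' * w'))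
      (fun y => ⨆ (_ : y ∈ t), B.map (cjK y)) hw ?_ ?_ ?_
    · intro y x hx
      by_cases hy : y ∈ t
      · simp only [iSup_pos hy] at hx
        constructor
        · intro a ha
          have hax : a * x ∈ (A : Set G) * (B.map (cjK y) : Set G) :=
            Set.mul_mem_mul ha hx
          rw [hperm y] at hax
          obtain ⟨w', hw', a', ha', he⟩ := Set.mem_mul.1 hax
          exact ⟨w', Bc_le_XsK hy hw', a', ha', he.symm⟩
        · intro a ha
          have hax : x * a ∈ (B.map (cjK y) : Set G) * (A : Set G) :=
            Set.mul_mem_mul hx ha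
          rw [← hperm y] at hax
          obtain ⟨a', ha', w', hw', he⟩ := Set.mem_mul.1 hax
          exact ⟨a', ha', w', Bc_le_XsK hy hw', he.symm⟩
      · simp only [iSup_neg hy] at hx
        rw [Subgroup.mem_bot.1 hx]
        exact ⟨fun a ha => ⟨1, one_mem _, a, ha, by group⟩,
               fun a ha => ⟨a, ha, 1, one_mem _, by group⟩⟩
    · exact ⟨fun a ha => ⟨1, one_mem _, a, ha, by group⟩,
             fun a ha => ⟨a, ha, 1, one_mem _, by group⟩⟩
    · rintro x y ⟨hx1, hx2⟩ ⟨hy1, hy2⟩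
      constructor
      · intro a ha
        obtain ⟨w1, hw1, a1, ha1, he1⟩ := hx1 a ha
        obtain ⟨w2, hw2, a2, ha2, he2⟩ := hy1 a1 ha1
        exact ⟨w1 * w2, mul_mem hw1 hw2, a2, ha2, by
          rw [← mul_assoc, he1, mul_assoc, he2, ← mul_assoc]⟩
      · intro a ha
        obtain ⟨a1, ha1, w1, hw1, he1⟩ := hy2 a ha
        obtain ⟨a2, ha2, w2, hw2, he2⟩ := hx2 a1 ha1
        exact ⟨a2, ha2, w2 * w1, mul_mem hw2 hw1, by
          rw [mul_assoc, he1, ← mul_assoc, he2, mul_assoc]⟩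
  ext u
  constructor
  · rintro huu
    obtain ⟨a, ha, w, hw, rfl⟩ := Set.mem_mul.1 huu
    obtain ⟨w', hw', a', ha', he⟩ := (main w hw).1 a ha
    rw [he]
    exact Set.mul_mem_mul hw' ha'
  · rintro huu
    obtain ⟨w, hw, a, ha, rfl⟩ := Set.mem_mul.1 huu
    obtain ⟨a', ha', w', hw', he⟩ := (main w hw).2 a ha
    rw [he]
    exact Set.mul_mem_mul ha' hw'

/-- the product set `A * X` as a subgroup, when they permute -/
private def prodSub (A X : Subgroup G)
    (hc : (A : Set G) * (X : Set G) = (X : Set G) * (A : Set G)) : Subgroup G where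
  carrier := (A : Set G) * (X : Set G)
  one_mem' := Set.mem_mul.2 ⟨1, A.one_mem, 1, X.one_mem, mul_one 1⟩
  mul_mem' := by
    rintro p q hp hq
    obtain ⟨a, ha, x, hx, rfl⟩ := Set.mem_mul.1 hp
    obtain ⟨a', ha', x', hx', rfl⟩ := Set.mem_mul.1 hq
    have hxa : x * a' ∈ (X : Set G) * (A : Set G) := Set.mul_mem_mul hx ha'
    rw [← hc] at hxa
    obtain ⟨a2, ha2, x2, hx2, he⟩ := Set.mem_mul.1 hxa
    refine Set.mem_mul.2 ⟨a * a2, mul_mem ha ha2, x2 * x', mul_mem hx2 hx', ?_⟩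
    calc a * a2 * (x2 * x') = a * (a2 * x2) * x' := by group
    _ = a * (x * a') * x' := by rw [he]
    _ = a * x * (a' * x') := by group
  inv_mem' := by
    rintro p hp
    obtain ⟨a, ha, x, hx, rfl⟩ := Set.mem_mul.1 hp
    show (a * x)⁻¹ ∈ (A : Set G) * (X : Set G)
    rw [hc, mul_inv_rev]
    exact Set.mul_mem_mul (inv_mem hx) (inv_mem ha)

/-- the classical trick: if `A * X ≠ G` then `A * X^z ≠ G` for every `z`. -/
private lemma conj_prod_ne_univ (A X : Subgroup G)
    (h : (A : Set G) * (X : Set G) ≠ Set.univ) (z : G) :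
    (A : Set G) * (X.map (cjK z) : Set G) ≠ Set.univ := by
  intro hu
  have hz : z⁻¹ ∈ (A : Set G) * (X.map (cjK z) : Set G) := hu ▸ Set.mem_univ _
  obtain ⟨a, ha, w, hw, he⟩ := Set.mem_mul.1 hz
  obtain ⟨x, hx, rfl⟩ := hw
  rw [cjK_apply] at he
  -- he : a * (z * x * z⁻¹) = z⁻¹
  have h1 : a * z * x = 1 := by
    have := congrArg (· * z) he
    simpa [mul_assoc] using this
  have hzv : z = a⁻¹ * x⁻¹ := by
    have h2 : a * z = x⁻¹ := by
      have h3 := congrArg (· * x⁻¹) h1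
      simpa [mul_assoc] using h3
    calc z = a⁻¹ * (a * z) := by group
    _ = a⁻¹ * x⁻¹ := by rw [h2]
  have hXz : X.map (cjK z) = X.map (cjK a⁻¹) := by
    rw [hzv, ← cmap_cmap, cmap_self X (inv_mem hx)]
  rw [hXz] at hu
  have himg : (cjK a⁻¹) '' ((A : Set G) * (X : Set G)) = Set.univ := by
    rw [Set.image_mul, ← Subgroup.coe_map, ← Subgroup.coe_map,
      cmap_self A (inv_mem ha)]
    exact hu
  apply h
  apply Set.eq_univ_of_forall
  intro u
  have : cjK a⁻¹ u ∈ (cjK a⁻¹) '' ((A : Set G) * (X : Set G)) :=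
    himg ▸ Set.mem_univ _
  obtain ⟨v, hv, hev⟩ := this
  rwa [← cjK_inj a⁻¹ hev]

end KegelAux

/-- Kegel: if `G ≠ AB` and `A B^x = B^x A` for all `x`, then some proper normal
subgroup contains `A` or `B`. -/
theorem proper_normal_subgroup_of_permutable
    (G : Type*) [Group G] [Finite G] (A B : Subgroup G)
    (hne : (A : Set G) * (B : Set G) ≠ Set.univ)
    (hperm : ∀ x : G,
      (A : Set G) * ((Subgroup.map (MulAut.conj x).toMonoidHom B : Subgroup G) : Set G) =
      ((Subgroup.map (MulAut.conj x).toMonoidHom B : Subgroup G) : Set G) * (A : Set G)) :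
    ∃ N : Subgroup G, N.Normal ∧ N ≠ ⊤ ∧ (A ≤ N ∨ B ≤ N) := by
  classical
  -- the hypothesis, in `cjK` form
  have hperm' : ∀ x : G, (A : Set G) * ((B.map (cjK x) : Subgroup G) : Set G) =
      ((B.map (cjK x) : Subgroup G) : Set G) * (A : Set G) := hperm
  -- the family of cardinalities
  set C : Set ℕ := {n : ℕ | ∃ t : Set G, t.Nonempty ∧
    ((A : Set G) * (XsK B t : Set G) ≠ Set.univ) ∧ Nat.card (XsK B t) = n} with hC
  have hXs1 : XsK B {(1 : G)} = B := by
    unfold XsK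
    rw [iSup_singleton, cmap_one]
  have hmemC : Nat.card B ∈ C := by
    refine ⟨{(1 : G)}, Set.singleton_nonempty 1, ?_, by rw [hXs1]⟩
    rw [hXs1]
    exact hne
  have hbddC : BddAbove C := by
    refine ⟨Nat.card G, ?_⟩
    rintro n ⟨t, -, -, rfl⟩
    calc Nat.card (XsK B t) ≤ Nat.card (⊤ : Subgroup G) :=
      Subgroup.card_le_of_le le_top
    _ = Nat.card G := Subgroup.card_top
  obtain ⟨t₀, ht₀ne, hprod₀, hcard₀⟩ := Nat.sSup_mem ⟨_, hmemC⟩ hbddC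
  set X₀ := XsK B t₀ with hX₀
  have hmax : ∀ t : Set G, t.Nonempty →
      (A : Set G) * (XsK B t : Set G) ≠ Set.univ →
      Nat.card (XsK B t) ≤ Nat.card X₀ := by
    intro t htne hX
    rw [hX₀, hcard₀]
    exact le_csSup hbddC ⟨t, htne, hX, rfl⟩
  -- the key step : A normalizes every conjugate of X₀
  have key : ∀ g : G, ∀ a ∈ A, (X₀.map (cjK g)).map (cjK a) = X₀.map (cjK g) := by
    intro g a ha
    set Y := X₀.map (cjK g) with hYdef
    have hYXs : Y = XsK B ((g * ·) '' t₀) := map_XsK B t₀ g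
    have hYne : (A : Set G) * (Y : Set G) ≠ Set.univ := conj_prod_ne_univ A X₀ hprod₀ g
    have hcardY : Nat.card Y = Nat.card X₀ := card_cmap X₀ g
    set s₁ : Set G := ⋃ a' ∈ (A : Set G), (a' * ·) '' ((g * ·) '' t₀) with hs₁
    set Z := XsK B s₁ with hZ
    have hZsup : Z = ⨆ a' ∈ (A : Set G), Y.map (cjK a') := by
      rw [hZ, hs₁, XsK_biUnion]
      refine iSup_congr fun a' => iSup_congr fun ha' => ?_
      rw [hYXs, map_XsK]
    -- A * Z = A * Y
    have hpushY : (A : Set G) * (Y : Set G) = (Y : Set G) * (A : Set G) := by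
      rw [hYXs]; exact push_lemma A B hperm' _
    set K := prodSub A Y hpushY with hK
    have hKcoe : (K : Set G) = (A : Set G) * (Y : Set G) := rfl
    have hZK : Z ≤ K := by
      rw [hZsup]
      refine iSup_le fun a' => iSup_le fun ha' => ?_
      rintro el ⟨y, hy, rfl⟩
      show cjK a' y ∈ (K : Set G)
      rw [hKcoe, cjK_apply]
      have h1 : y * a'⁻¹ ∈ (Y : Set G) * (A : Set G) :=
        Set.mul_mem_mul hy (inv_mem ha')
      rw [← hpushY] at h1
      obtain ⟨a3, ha3, y3, hy3, he3⟩ := Set.mem_mul.1 h1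
      refine Set.mem_mul.2 ⟨a' * a3, mul_mem ha' ha3, y3, hy3, ?_⟩
      calc a' * a3 * y3 = a' * (a3 * y3) := by group
      _ = a' * (y * a'⁻¹) := by rw [he3]
      _ = a' * y * a'⁻¹ := by group
    have hAA : (A : Set G) * (A : Set G) = (A : Set G) := by
      apply Set.Subset.antisymm
      · rintro u hu
        obtain ⟨a1, ha1, a2, ha2, rfl⟩ := Set.mem_mul.1 hu
        exact mul_mem ha1 ha2
      · intro u hu
        exact Set.mem_mul.2 ⟨u, hu, 1, one_mem _, mul_one u⟩
    have hZne : (A : Set G) * (Z : Set G) ≠ Set.univ := by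
      intro hu
      apply hYne
      apply Set.eq_univ_of_univ_subset
      calc Set.univ = (A : Set G) * (Z : Set G) := hu.symm
      _ ⊆ (A : Set G) * (K : Set G) :=
        Set.mul_subset_mul_left (SetLike.coe_subset_coe.2 hZK)
      _ = (A : Set G) * ((A : Set G) * (Y : Set G)) := by rw [hKcoe]
      _ = (A : Set G) * (A : Set G) * (Y : Set G) := (mul_assoc _ _ _).symm
      _ = (A : Set G) * (Y : Set G) := by rw [hAA]
    have hs₁ne : s₁.Nonempty := by
      obtain ⟨y₀, hy₀⟩ := ht₀ne
      exact ⟨1 * (g * y₀), Set.mem_biUnion (A.one_mem) ⟨g * y₀, ⟨y₀, hy₀, rfl⟩, rfl⟩⟩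
    have hcardZ : Nat.card Z ≤ Nat.card X₀ := hmax s₁ hs₁ne hZne
    have hYZ : Y ≤ Z := by
      have h1 : Y.map (cjK (1 : G)) ≤ ⨆ a' ∈ (A : Set G), Y.map (cjK a') :=
        le_iSup₂ (f := fun a' (_ : a' ∈ (A : Set G)) => Y.map (cjK a')) (1 : G) (A.one_mem)
      rw [cmap_one] at h1
      rw [hZsup]
      exact h1
    have hYeqZ : Y = Z :=
      sg_eq_of_le_card hYZ (hcardZ.trans_eq hcardY.symm)
    have hmaple : Y.map (cjK a) ≤ Z :=
      le_iSup₂ (f := fun a' (_ : a' ∈ (A : Set G)) => Y.map (cjK a')) a ha |>.trans_eq hZsup.symm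
    rw [← hYeqZ] at hmaple
    exact sg_eq_of_le_card hmaple ((card_cmap Y a).symm.trans_le le_rfl)
  -- case split on whether X₀ is normal
  by_cases hnorm : ∀ g : G, X₀.map (cjK g) = X₀
  · -- X₀ itself is the required normal subgroup, containing B
    refine ⟨X₀, ⟨fun n hn g => ?_⟩, ?_, Or.inr ?_⟩
    · have := hnorm g
      rw [← this]
      exact ⟨n, hn, rfl⟩
    · intro htop
      apply hprod₀
      apply Set.eq_univ_of_forall
      intro u
      exact Set.mem_mul.2 ⟨1, A.one_mem, u, by rw [htop]; trivial, one_mul u⟩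
    · obtain ⟨y₀, hy₀⟩ := ht₀ne
      have h1 : B.map (cjK y₀) ≤ X₀ := Bc_le_XsK hy₀
      have h2 : (B.map (cjK y₀)).map (cjK y₀⁻¹) ≤ X₀.map (cjK y₀⁻¹) :=
        Subgroup.map_mono h1
      rwa [cmap_cmap, inv_mul_cancel, cmap_one, hnorm y₀⁻¹] at h2
  · -- the normal core of the normalizer works, containing A
    push_neg at hnorm
    obtain ⟨g₀, hg₀⟩ := hnorm
    refine ⟨(Subgroup.normalizer (X₀ : Set G)).normalCore, Subgroup.normalCore_normal _, ?_, Or.inl ?_⟩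
    · intro htop
      apply hg₀
      apply cmap_eq_iff_mem_normalizer.2
      have : (Subgroup.normalizer (X₀ : Set G)) = ⊤ := by
        apply top_le_iff.1
        rw [← htop]
        exact Subgroup.normalCore_le _
      rw [this]
      trivial
    · intro a ha
      intro b
      apply cmap_eq_iff_mem_normalizer.1
      have h1 := key b⁻¹ a ha
      have h2 := congrArg (Subgroup.map (cjK b)) h1
      rw [cmap_cmap, cmap_cmap, cmap_cmap, mul_inv_cancel, cmap_one] at h2
      exact h2
end

section
/- Let G = AB be a finite group that is the product of two proper subgroups A and B. Then: (1) there exist Sylow p-subgroups G_p, A_p, B_p of G, A, B respectively such that G_p = A_pB_p; (2) for every x ∈ G, G = A^xB and G ≠ AA^x. -/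
open Pointwise

section FactorizationHelpers

variable {G' : Type*} [Group G']

private theorem card_mul_mul_card_inf' (H K : Subgroup G') :
    Nat.card H * Nat.card K
      = Nat.card ↥((H : Set G') * (K : Set G')) * Nat.card ↥(H ⊓ K) := by
  classical
  rw [← Nat.card_prod, ← Nat.card_prod]
  refine Nat.card_congr ?_
  choose f hf g hg hfg using fun x : ↥((H : Set G') * (K : Set G')) => Set.mem_mul.mp x.2
  have memX : ∀ (u : H) (v : K), ((u : G') * v) ∈ (H : Set G') * (K : Set G') :=
    fun u v => Set.mul_mem_mul u.2 v.2
  have memD : ∀ (u : H) (v : K),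
      (f ⟨(u : G') * v, memX u v⟩)⁻¹ * u ∈ H ⊓ K := by
    intro u v
    set x : ↥((H : Set G') * (K : Set G')) := ⟨(u : G') * v, memX u v⟩ with hx
    refine Subgroup.mem_inf.mpr ⟨mul_mem (inv_mem (hf x)) u.2, ?_⟩
    have h2 : (f x)⁻¹ * (u : G') = g x * (v : G')⁻¹ := by
      rw [inv_mul_eq_iff_eq_mul, ← mul_assoc, hfg, mul_inv_cancel_right]
    rw [h2]
    exact mul_mem (hg x) (inv_mem v.2)
  refine
    { toFun := fun p => (⟨(p.1 : G') * p.2, memX p.1 p.2⟩, ⟨_, memD p.1 p.2⟩),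
      invFun := fun q =>
        (⟨f q.1 * q.2, mul_mem (hf q.1) (Subgroup.mem_inf.mp q.2.2).1⟩,
         ⟨(q.2 : G')⁻¹ * g q.1, mul_mem (inv_mem (Subgroup.mem_inf.mp q.2.2).2) (hg q.1)⟩),
      left_inv := ?_, right_inv := ?_ }
  · intro p
    refine Prod.ext (Subtype.ext ?_) (Subtype.ext ?_)
    · exact mul_inv_cancel_left _ _
    · show ((f _)⁻¹ * (p.1 : G'))⁻¹ * g _ = (p.2 : G')
      rw [mul_inv_rev, inv_inv, mul_assoc, hfg]
      exact inv_mul_cancel_left _ _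
  · intro q
    have key : ∀ y, y = q.1 → (f y)⁻¹ * (f q.1 * (q.2 : G')) = (q.2 : G') := by
      rintro y rfl; exact inv_mul_cancel_left _ _
    refine Prod.ext (Subtype.ext ?_) (Subtype.ext ?_)
    · show f q.1 * (q.2 : G') * ((q.2 : G')⁻¹ * g q.1) = (q.1 : G')
      rw [mul_assoc, mul_inv_cancel_left, hfg]
    · exact key _ (Subtype.ext (by
        show f q.1 * (q.2 : G') * ((q.2 : G')⁻¹ * g q.1) = (q.1 : G')
        rw [mul_assoc, mul_inv_cancel_left, hfg]))

private theorem conj_comp_aux (u v : G') :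
    (MulAut.conj u).toMonoidHom.comp (MulAut.conj v).toMonoidHom
      = (MulAut.conj (u * v)).toMonoidHom := by
  ext t; simp [MulAut.conj_apply, mul_assoc]

private theorem map_conj_self' (A : Subgroup G') {a : G'} (ha : a ∈ A) :
    A.map (MulAut.conj a).toMonoidHom = A := by
  apply le_antisymm
  · rintro y ⟨t, ht, rfl⟩
    show a * t * a⁻¹ ∈ A
    exact mul_mem (mul_mem ha ht) (inv_mem ha)
  · intro t ht
    refine ⟨a⁻¹ * t * a, mul_mem (mul_mem (inv_mem ha) ht) ha, ?_⟩
    show a * (a⁻¹ * t * a) * a⁻¹ = t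
    group

private theorem smul_eq_map_conj_aux (e : MulAut G') (H : Subgroup G') :
    e • H = H.map e.toMonoidHom := by
  ext x
  rw [Subgroup.mem_pointwise_smul_iff_inv_smul_mem]
  constructor
  · intro h; exact ⟨e⁻¹ • x, h, by simp [MulAut.smul_def]⟩
  · rintro ⟨y, hy, rfl⟩; simpa [MulAut.smul_def] using hy

private theorem not_dvd_of_ordProj_mul {p n m : ℕ} (hp : p.Prime) (hn : n ≠ 0)
    (h : p ^ n.factorization p * m = n) : ¬ p ∣ m := by
  intro hdvd
  have hd : p ^ (n.factorization p + 1) ∣ n := by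
    rw [pow_succ]
    exact (mul_dvd_mul (dvd_refl _) hdvd).trans (dvd_of_eq h)
  exact Nat.pow_succ_factorization_not_dvd hn hp hd

private theorem not_dvd_relindex_aux [Finite G'] {p : ℕ} (hp : p.Prime)
    {H K : Subgroup G'} (hHK : H ≤ K)
    (hcard : Nat.card H = p ^ (Nat.card K).factorization p) : ¬ p ∣ H.relIndex K := by
  have h1 : Nat.card (H.subgroupOf K) * (H.subgroupOf K).index = Nat.card K :=
    Subgroup.card_mul_index _
  rw [Nat.card_congr (Subgroup.subgroupOfEquivOfLe hHK).toEquiv, hcard] at h1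
  exact not_dvd_of_ordProj_mul hp Nat.card_pos.ne' h1

end FactorizationHelpers

/-- If `G = AB` with `A, B` proper: (1) for every prime `p` there are Sylow
`p`-subgroups `G_p = A_p B_p`; (2) `G = A^x B` and `G ≠ A A^x` for every `x`. -/
theorem factorized_sylow_and_conjugate
    (G : Type*) [Group G] [Finite G] (A B : Subgroup G)
    (hA : A ≠ ⊤) (hB : B ≠ ⊤)
    (hAB : (A : Set G) * (B : Set G) = Set.univ) :
    (∀ p : ℕ, p.Prime →
      ∃ Gp Ap Bp : Subgroup G,
        (IsPGroup p Gp ∧ ¬ p ∣ Gp.index) ∧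
        (Ap ≤ A ∧ IsPGroup p Ap ∧ ¬ p ∣ Ap.relIndex A) ∧
        (Bp ≤ B ∧ IsPGroup p Bp ∧ ¬ p ∣ Bp.relIndex B) ∧
        (Gp : Set G) = (Ap : Set G) * (Bp : Set G)) ∧
    (∀ x : G,
      ((Subgroup.map (MulAut.conj x).toMonoidHom A : Subgroup G) : Set G) * (B : Set G)
        = Set.univ ∧
      (A : Set G) * ((Subgroup.map (MulAut.conj x).toMonoidHom A : Subgroup G) : Set G)
        ≠ Set.univ) := by
  have hBA : (B : Set G) * (A : Set G) = Set.univ := by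
    rw [Set.eq_univ_iff_forall]
    intro gg
    have hg : gg⁻¹ ∈ (A : Set G) * (B : Set G) := by rw [hAB]; trivial
    obtain ⟨u, hu, v, hv, huv⟩ := Set.mem_mul.mp hg
    exact Set.mem_mul.mpr ⟨v⁻¹, inv_mem hv, u⁻¹, inv_mem hu,
      by rw [← mul_inv_rev, huv, inv_inv]⟩
  constructor
  · -- part (1): Sylow factorization
    intro p hp
    haveI : Fact p.Prime := ⟨hp⟩
    haveI : Finite (Subgroup G) :=
      Finite.of_injective (fun H : Subgroup G => (H : Set G)) SetLike.coe_injective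
    haveI : Finite (Sylow p G) :=
      Finite.of_injective (fun P : Sylow p G => (P : Subgroup G)) (fun P Q h => Sylow.ext h)
    obtain ⟨PA⟩ : Nonempty (Sylow p A) := Sylow.nonempty
    obtain ⟨PB⟩ : Nonempty (Sylow p B) := Sylow.nonempty
    set Ap0 : Subgroup G := Subgroup.map A.subtype (PA : Subgroup A) with hAp0def
    set Bp0 : Subgroup G := Subgroup.map B.subtype (PB : Subgroup B) with hBp0def
    have hAp0le : Ap0 ≤ A := Subgroup.map_subtype_le _
    have hBp0le : Bp0 ≤ B := Subgroup.map_subtype_le _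
    have hAp0p : IsPGroup p Ap0 := PA.isPGroup'.map _
    have hBp0p : IsPGroup p Bp0 := PB.isPGroup'.map _
    have cardAp0 : Nat.card Ap0 = p ^ (Nat.card A).factorization p := by
      rw [← Nat.card_congr (Subgroup.equivMapOfInjective (PA : Subgroup A) A.subtype
        A.subtype_injective).toEquiv]
      exact PA.card_eq_multiplicity
    have cardBp0 : Nat.card Bp0 = p ^ (Nat.card B).factorization p := by
      rw [← Nat.card_congr (Subgroup.equivMapOfInjective (PB : Subgroup B) B.subtype
        B.subtype_injective).toEquiv]
      exact PB.card_eq_multiplicity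
    obtain ⟨S₁, hS₁⟩ := hAp0p.exists_le_sylow
    obtain ⟨S₂, hS₂⟩ := hBp0p.exists_le_sylow
    obtain ⟨g, hg⟩ := MulAction.exists_smul_eq G S₁ S₂
    obtain ⟨c, hc, a, ha, hca⟩ :
        ∃ c ∈ (B : Set G), ∃ a ∈ (A : Set G), c * a = g :=
      Set.mem_mul.mp (show g ∈ (B : Set G) * (A : Set G) by rw [hBA]; trivial)
    have hconjS : (S₂ : Subgroup G) = (S₁ : Subgroup G).map (MulAut.conj g).toMonoidHom := by
      rw [← hg, Sylow.coe_subgroup_smul, smul_eq_map_conj_aux]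
    set SG : Subgroup G := (S₁ : Subgroup G).map (MulAut.conj a).toMonoidHom with hSGdef
    set Ap : Subgroup G := Ap0.map (MulAut.conj a).toMonoidHom with hApdef
    set Bp : Subgroup G := Bp0.map (MulAut.conj c⁻¹).toMonoidHom with hBpdef
    have hApSG : Ap ≤ SG := Subgroup.map_mono hS₁
    have hBpSG : Bp ≤ SG := by
      have h1 : Bp0 ≤ (S₁ : Subgroup G).map (MulAut.conj g).toMonoidHom := hconjS ▸ hS₂
      have h2 := Subgroup.map_mono (f := (MulAut.conj c⁻¹).toMonoidHom) h1
      have heq : Subgroup.map (MulAut.conj c⁻¹).toMonoidHom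
          (Subgroup.map (MulAut.conj g).toMonoidHom (S₁ : Subgroup G)) = SG := by
        rw [Subgroup.map_map, conj_comp_aux, (show c⁻¹ * g = a by rw [← hca]; group)]
      exact heq ▸ h2
    have hApA : Ap ≤ A := (map_conj_self' A ha) ▸ Subgroup.map_mono hAp0le
    have hBpB : Bp ≤ B := (map_conj_self' B (inv_mem hc)) ▸ Subgroup.map_mono hBp0le
    have cardmap : ∀ (e : MulAut G) (H : Subgroup G),
        Nat.card (H.map e.toMonoidHom) = Nat.card H := fun e H =>
      (Nat.card_congr (Subgroup.equivMapOfInjective H e.toMonoidHom e.injective).toEquiv).symm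
    have cardAp : Nat.card Ap = p ^ (Nat.card A).factorization p := by
      rw [hApdef, cardmap]; exact cardAp0
    have cardBp : Nat.card Bp = p ^ (Nat.card B).factorization p := by
      rw [hBpdef, cardmap]; exact cardBp0
    have cardSG : Nat.card SG = p ^ (Nat.card G).factorization p := by
      rw [hSGdef, cardmap]; exact S₁.card_eq_multiplicity
    have hSGp : IsPGroup p SG := S₁.isPGroup'.map _
    have hApp : IsPGroup p Ap := hAp0p.map _
    have hBpp : IsPGroup p Bp := hBp0p.map _
    have hGpidx : ¬ p ∣ SG.index := by
      have h1 : Nat.card SG * SG.index = Nat.card G := Subgroup.card_mul_index SG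
      rw [cardSG] at h1
      exact not_dvd_of_ordProj_mul hp Nat.card_pos.ne' h1
    have hAprel : ¬ p ∣ Ap.relIndex A := not_dvd_relindex_aux hp hApA cardAp
    have hBprel : ¬ p ∣ Bp.relIndex B := not_dvd_relindex_aux hp hBpB cardBp
    have hsub : (Ap : Set G) * (Bp : Set G) ⊆ (SG : Set G) := by
      rintro z ⟨u, hu, v, hv, rfl⟩
      exact mul_mem (hApSG hu) (hBpSG hv)
    have hDpg : IsPGroup p (↥(Ap ⊓ Bp)) := hApp.to_inf_left
    obtain ⟨k, hk⟩ := IsPGroup.iff_card.mp hDpg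
    have hkd : k ≤ (Nat.card ↥(A ⊓ B)).factorization p := by
      have hdvd : (p : ℕ) ^ k ∣ Nat.card ↥(A ⊓ B) :=
        hk ▸ Subgroup.card_dvd_of_le (inf_le_inf hApA hBpB)
      exact (Nat.Prime.pow_dvd_iff_le_factorization hp Nat.card_pos.ne').mp hdvd
    have hGD : Nat.card G * Nat.card ↥(A ⊓ B) = Nat.card A * Nat.card B := by
      have h := card_mul_mul_card_inf' A B
      rw [hAB, Nat.card_coe_set_eq, Set.ncard_univ] at h
      exact h.symm
    have hfac : (Nat.card G).factorization p + (Nat.card ↥(A ⊓ B)).factorization p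
        = (Nat.card A).factorization p + (Nat.card B).factorization p := by
      have h : (Nat.card G * Nat.card ↥(A ⊓ B)).factorization p
          = (Nat.card ↥A * Nat.card ↥B).factorization p := by rw [hGD]
      rwa [Nat.factorization_mul Nat.card_pos.ne' Nat.card_pos.ne',
        Nat.factorization_mul Nat.card_pos.ne' Nat.card_pos.ne',
        Finsupp.add_apply, Finsupp.add_apply] at h
    have hprod := card_mul_mul_card_inf' Ap Bp
    rw [cardAp, cardBp, hk] at hprod
    have hcardX : Nat.card ↥((Ap : Set G) * (Bp : Set G))
        = p ^ (Nat.card G).factorization p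
          * p ^ ((Nat.card ↥(A ⊓ B)).factorization p - k) := by
      apply Nat.eq_of_mul_eq_mul_right (pow_pos hp.pos k)
      rw [mul_assoc, ← pow_add, Nat.sub_add_cancel hkd, ← hprod, ← pow_add, ← pow_add, hfac]
    have hle : (SG : Set G).ncard ≤ ((Ap : Set G) * (Bp : Set G)).ncard := by
      rw [← Nat.card_coe_set_eq, ← Nat.card_coe_set_eq, hcardX, SetLike.coe_sort_coe,
        cardSG]
      exact Nat.le_mul_of_pos_right _ (pow_pos hp.pos _)
    have hmain : (Ap : Set G) * (Bp : Set G) = (SG : Set G) :=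
      Set.eq_of_subset_of_ncard_le hsub hle (Set.toFinite _)
    exact ⟨SG, Ap, Bp, ⟨hSGp, hGpidx⟩, ⟨hApA, hApp, hAprel⟩, ⟨hBpB, hBpp, hBprel⟩, hmain.symm⟩
  · -- part (2)
    intro x
    obtain ⟨b, hb, a, ha, rfl⟩ : ∃ b ∈ (B : Set G), ∃ a ∈ (A : Set G), b * a = x := by
      have : x ∈ (B : Set G) * (A : Set G) := by rw [hBA]; trivial
      exact Set.mem_mul.mp this
    constructor
    · rw [Set.eq_univ_iff_forall]
      intro gg
      have hg : b⁻¹ * gg ∈ (A : Set G) * (B : Set G) := by rw [hAB]; trivial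
      obtain ⟨a', ha', b', hb', heq⟩ := Set.mem_mul.mp hg
      refine Set.mem_mul.mpr ⟨(b * a) * (a⁻¹ * a' * a) * (b * a)⁻¹,
        ⟨a⁻¹ * a' * a, mul_mem (mul_mem (inv_mem ha) ha') ha, rfl⟩,
        b * b', mul_mem hb hb', ?_⟩
      have hgg : gg = b * (a' * b') := by rw [heq, mul_inv_cancel_left]
      rw [hgg]
      group
    · intro hcon
      have hx : (b * a)⁻¹ ∈ (A : Set G)
          * ((Subgroup.map (MulAut.conj (b * a)).toMonoidHom A : Subgroup G) : Set G) := by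
        rw [hcon]; trivial
      obtain ⟨a₁, ha₁, u, hu, hux⟩ := Set.mem_mul.mp hx
      obtain ⟨a₂, ha₂, rfl⟩ := Subgroup.mem_map.mp hu
      have hxa : b * a ∈ A := by
        have h1 : a₁ * ((b * a) * a₂ * (b * a)⁻¹) = (b * a)⁻¹ := by
          simpa [MulAut.conj_apply, mul_assoc] using hux
        have h2 : a₁ * (b * a) * a₂ = 1 := by
          have := congrArg (· * (b * a)) h1
          simpa [mul_assoc] using this
        have h3 : a₁⁻¹ * a₂⁻¹ = b * a := by
          have := congrArg (fun t => a₁⁻¹ * t * a₂⁻¹) h2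
          simpa [mul_assoc] using this.symm
        rw [← h3]
        exact mul_mem (inv_mem ha₁) (inv_mem ha₂)
      rw [map_conj_self' A hxa, coe_mul_coe] at hcon
      exact hA (Subgroup.coe_eq_univ.mp hcon)
end

section
/- If a finite group G satisfies D_π for a set of primes π and N is a normal subgroup of G, then the quotient G/N satisfies D_π. -/
open Pointwise

lemma exists_pi_lift {G : Type*} [Group G] [Finite G] (π : Set ℕ) (N : Subgroup G) [N.Normal]
    (K : Subgroup (G ⧸ N)) (hK : IsPiSubgroup π K) :
    ∃ X : Subgroup G, IsPiSubgroup π X ∧ X.map (QuotientGroup.mk' N) = K := by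
  haveI : Finite (G ⧸ N) := Quotient.finite _
  let S := {X : Subgroup G // X.map (QuotientGroup.mk' N) = K}
  haveI : Nonempty S :=
    ⟨⟨K.comap (QuotientGroup.mk' N),
      Subgroup.map_comap_eq_self_of_surjective (QuotientGroup.mk'_surjective N) K⟩⟩
  obtain ⟨⟨X, hX⟩, hmin⟩ := Finite.exists_min (fun s : S => Nat.card s.1)
  refine ⟨X, ?_, hX⟩
  intro p hp hpd
  by_contra hpπ
  haveI : Fact p.Prime := ⟨hp⟩
  set f : ↥X →* G ⧸ N := (QuotientGroup.mk' N).comp X.subtype with hf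
  have hrange : f.range = K := by
    rw [hf, MonoidHom.range_comp, Subgroup.range_subtype, hX]
  set L : Subgroup ↥X := f.ker with hL
  have hcardq : Nat.card (↥X ⧸ L) = Nat.card K := by
    rw [← hrange]
    exact Nat.card_congr (QuotientGroup.quotientKerEquivRange f).toEquiv
  have hcardX : Nat.card ↥X = Nat.card K * Nat.card L := by
    rw [← hcardq]; exact Subgroup.card_eq_card_quotient_mul_card_subgroup L
  have hpK : ¬ p ∣ Nat.card K := fun h => hpπ (hK p hp h)
  have hpL : p ∣ Nat.card L := by
    rcases (Nat.Prime.dvd_mul hp).mp (hcardX ▸ hpd) with h | h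
    · exact absurd h hpK
    · exact h
  -- Frattini argument
  obtain P : Sylow p ↥L := default
  set Q : Subgroup ↥X := (P : Subgroup ↥L).map L.subtype with hQ
  have hQL : Q ≤ L := Subgroup.map_subtype_le _
  have hfr : (Subgroup.normalizer (Q : Set ↥X)) ⊔ L = ⊤ := Sylow.normalizer_sup_eq_top P
  -- any subgroup A of X with A ⊔ L = ⊤ maps onto K
  have key : ∀ A : Subgroup ↥X, A ⊔ L = ⊤ → (A.map X.subtype).map (QuotientGroup.mk' N) = K := by
    intro A hA
    have : (A.map X.subtype).map (QuotientGroup.mk' N) = A.map f := by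
      rw [Subgroup.map_map]
    have hmapL : L.map f = ⊥ := (Subgroup.map_eq_bot_iff _).mpr le_rfl
    rw [this, ← hrange, MonoidHom.range_eq_map, ← hA, Subgroup.map_sup, hmapL, sup_bot_eq]
  have cardmap : ∀ A : Subgroup ↥X, Nat.card (A.map X.subtype) = Nat.card A := by
    intro A
    exact (Nat.card_congr (Subgroup.equivMapOfInjective A X.subtype
      (Subgroup.subtype_injective X)).toEquiv).symm
  -- Q is normal in X
  have hQn : Q.Normal := by
    rw [← Subgroup.normalizer_eq_top_iff]
    have h1 := hmin ⟨(Subgroup.normalizer (Q : Set ↥X)).map X.subtype, key _ hfr⟩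
    simp only at h1
    rw [cardmap] at h1
    have h2 : Nat.card (Subgroup.normalizer (Q : Set ↥X)) ≤ Nat.card ↥X := Nat.card_le_card_of_injective _
      (Subgroup.subtype_injective _)
    exact Subgroup.eq_top_of_card_eq _ (le_antisymm h2 h1)
  have hL0 : Nat.card ↥L ≠ 0 := Nat.card_pos.ne'
  set a := (Nat.card ↥L).factorization p with ha
  have hcardQ : Nat.card Q = p ^ a := by
    rw [hQ, (Nat.card_congr (Subgroup.equivMapOfInjective (P : Subgroup ↥L) L.subtype
      (Subgroup.subtype_injective L)).toEquiv).symm]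
    exact P.card_eq_multiplicity
  have ha1 : 1 ≤ a := by
    rw [ha]
    exact (Nat.Prime.factorization_pos_of_dvd hp hL0 hpL)
  have hpQind : ¬ p ∣ Q.index := by
    intro hd
    have h1 : Q.index * Nat.card Q = Nat.card ↥X := Subgroup.index_mul_card Q
    have h2 : p ^ (a + 1) ∣ Nat.card ↥X := by
      rw [← h1, pow_succ, mul_comm (Q.index)]
      exact mul_dvd_mul (hcardQ ▸ dvd_rfl) hd
    have hdL : p ^ (a + 1) ∣ Nat.card ↥L := by
      refine (Nat.Coprime.dvd_of_dvd_mul_left ?_ (hcardX ▸ h2))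
      exact (Nat.Coprime.pow_left _ ((Nat.Prime.coprime_iff_not_dvd hp).mpr hpK))
    rw [Nat.Prime.pow_dvd_iff_le_factorization hp hL0] at hdL
    omega
  have hcop : Nat.Coprime (Nat.card Q) Q.index := by
    rw [hcardQ]
    exact Nat.Coprime.pow_left _ ((Nat.Prime.coprime_iff_not_dvd hp).mpr hpQind)
  obtain ⟨C, hC⟩ := Subgroup.exists_right_complement'_of_coprime hcop
  have hCL : C ⊔ L = ⊤ := by
    rw [← top_le_iff, ← hC.sup_eq_top]
    exact sup_le ((le_sup_right : L ≤ C ⊔ L).trans' hQL) le_sup_left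
  have h1 := hmin ⟨C.map X.subtype, key C hCL⟩
  simp only at h1
  rw [cardmap] at h1
  have hcm : Nat.card Q * Nat.card C = Nat.card ↥X := hC.card_mul
  have hQ1 : 1 < Nat.card Q := by
    rw [hcardQ]
    exact Nat.one_lt_pow (by omega) hp.one_lt
  have hC0 : 0 < Nat.card C := Nat.card_pos
  nlinarith

lemma map_card_dvd {G : Type*} [Group G] [Finite G] (N : Subgroup G) [N.Normal]
    (H : Subgroup G) :
    Nat.card (H.map (QuotientGroup.mk' N)) ∣ Nat.card H := by
  exact Subgroup.card_dvd_of_surjective ((QuotientGroup.mk' N).subgroupMap H)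
    (MonoidHom.subgroupMap_surjective _ _)

lemma isHall_map {π : Set ℕ} {G : Type*} [Group G] [Finite G] (N : Subgroup G) [N.Normal]
    {H : Subgroup G} (hH : IsHall π H) : IsHall π (H.map (QuotientGroup.mk' N)) := by
  constructor
  · intro p hp hd
    exact hH.1 p hp (hd.trans (map_card_dvd N H))
  · intro p hp hd
    exact hH.2 p hp (hd.trans (Subgroup.index_map_dvd H (QuotientGroup.mk'_surjective N)))

lemma isHall_eq_of_le {π : Set ℕ} {G : Type*} [Group G] [Finite G] {H K : Subgroup G}
    (hH : IsHall π H) (hK : IsHall π K) (hle : H ≤ K) : H = K := by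
  have h1 : H.relIndex K ∣ H.index := Subgroup.relIndex_dvd_index_of_le hle
  have h2 : H.relIndex K ∣ Nat.card K := by
    rw [Subgroup.relIndex]
    exact Subgroup.index_dvd_card _
  have h3 : H.relIndex K = 1 := by
    by_contra hne
    obtain ⟨p, hp, hpd⟩ := Nat.exists_prime_and_dvd hne
    exact hH.2 p hp (hpd.trans h1) (hK.1 p hp (hpd.trans h2))
  exact le_antisymm hle (Subgroup.relIndex_eq_one.mp h3)

lemma map_conj_comm {G : Type*} [Group G] (N : Subgroup G) [N.Normal] (g : G)
    (H : Subgroup G) :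
    (H.map (MulAut.conj g).toMonoidHom).map (QuotientGroup.mk' N) =
      (H.map (QuotientGroup.mk' N)).map (MulAut.conj (QuotientGroup.mk' N g)).toMonoidHom := by
  rw [Subgroup.map_map, Subgroup.map_map]
  congr 1

/-- If `G` satisfies `D_π` and `N ⊴ G`, then `G/N` satisfies `D_π`. -/
theorem satisfiesD_quotient
    (π : Set ℕ) (G : Type*) [Group G] [Finite G] (hD : SatisfiesD π G)
    (N : Subgroup G) [N.Normal] :
    SatisfiesD π (G ⧸ N) := by
  haveI : Finite (G ⧸ N) := Quotient.finite _
  obtain ⟨⟨H0, hH0⟩, hconj, hcover⟩ := hD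
  have lift_hall : ∀ A : Subgroup (G ⧸ N), IsHall π A →
      ∃ H : Subgroup G, IsHall π H ∧ H.map (QuotientGroup.mk' N) = A := by
    intro A hA
    obtain ⟨X, hXpi, hXmap⟩ := exists_pi_lift π N A hA.1
    obtain ⟨H, hH, hXH⟩ := hcover X hXpi
    refine ⟨H, hH, ?_⟩
    have h1 : A ≤ H.map (QuotientGroup.mk' N) := hXmap ▸ Subgroup.map_mono hXH
    exact (isHall_eq_of_le hA (isHall_map N hH) h1).symm
  refine ⟨⟨H0.map (QuotientGroup.mk' N), isHall_map N hH0⟩, ?_, ?_⟩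
  · intro A B hA hB
    obtain ⟨H, hH, rfl⟩ := lift_hall A hA
    obtain ⟨H', hH', rfl⟩ := lift_hall B hB
    obtain ⟨g, rfl⟩ := hconj H H' hH hH'
    exact ⟨QuotientGroup.mk' N g, map_conj_comm N g H⟩
  · intro S hS
    obtain ⟨X, hXpi, hXmap⟩ := exists_pi_lift π N S hS
    obtain ⟨H, hH, hXH⟩ := hcover X hXpi
    exact ⟨H.map (QuotientGroup.mk' N), isHall_map N hH, hXmap ▸ Subgroup.map_mono hXH⟩
end

section
/- Let σ_1 = {2,3}, σ_2 = {5}, σ_3 = the set of primes not in {2,3,5}, giving a partition σ of the primes. Then the alternating group A_5 is the product of two σ-nilpotent subgroups (a copy of A_4 and a Sylow 5-subgroup), but A_5 is not σ-soluble. Hence the product of two σ-nilpotent finite groups need not be σ-soluble. -/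
open Pointwise

/-! ### Auxiliary material -/

/-- The point stabilizer of `4` in `A₅`. -/
def stab4 : Subgroup (alternatingGroup (Fin 5)) where
  carrier := {g | (g : Equiv.Perm (Fin 5)) 4 = 4}
  one_mem' := rfl
  mul_mem' := by
    intro a b ha hb
    simp only [Set.mem_setOf_eq, Subgroup.coe_mul, Equiv.Perm.mul_apply] at *
    rw [hb, ha]
  inv_mem' := by
    intro a ha
    simp only [Set.mem_setOf_eq, Subgroup.coe_inv] at *
    exact Equiv.Perm.inv_eq_iff_eq.mpr ha.symm

instance : DecidablePred (· ∈ stab4) :=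
  fun g => decidable_of_iff ((g : Equiv.Perm (Fin 5)) 4 = 4) Iff.rfl

lemma card_stab4 : Nat.card stab4 = 12 := by
  rw [Nat.card_eq_fintype_card]; decide

/-- The 5-cycle `(0 1 2 3 4)` as an element of `A₅`. -/
def c5 : alternatingGroup (Fin 5) :=
  ⟨finRotate 5, by
    rw [Equiv.Perm.mem_alternatingGroup]
    decide⟩

lemma orderOf_c5 : orderOf c5 = 5 := by
  haveI : Fact (Nat.Prime 5) := ⟨by norm_num⟩
  refine orderOf_eq_prime ?_ ?_
  · ext : 1
    show ((finRotate 5) ^ 5 : Equiv.Perm (Fin 5)) = 1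
    decide
  · intro h
    have : (finRotate 5 : Equiv.Perm (Fin 5)) = 1 := congrArg Subtype.val h
    revert this; decide

lemma card_B : Nat.card (Subgroup.zpowers c5) = 5 := by
  rw [Nat.card_zpowers, orderOf_c5]

/-- a nonempty finite group of whose order every prime lies in `σ i` is
σ-nilpotent as soon as it is commutative. -/
lemma sigmaNilpotent_of_comm {ι : Type*} (σ : ι → Set ℕ) (G : Type*) [Group G] [Finite G]
    (i : ι) (hcomm : ∀ x y : G, x * y = y * x)
    (hcard : ∀ p : ℕ, p.Prime → p ∣ Nat.card G → p ∈ σ i) :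
    SigmaNilpotent σ G := by
  rintro H K ⟨hH, hK, hKH, -⟩
  refine ⟨i, fun p hp hpd => ?_⟩
  have hC : chiefCentralizer H K = Set.univ := by
    ext g
    simp only [Set.mem_univ, iff_true, chiefCentralizer, Set.mem_setOf_eq]
    intro h hh
    rw [hcomm g h]
    simpa using K.one_mem
  have hCc : Nat.card (chiefCentralizer H K) = Nat.card G := by
    rw [hC]; exact Nat.card_congr (Equiv.Set.univ G)
  have hGpos : 0 < Nat.card G := Nat.card_pos
  rw [hCc, Nat.div_self hGpos, mul_one] at hpd
  have h1 : Nat.card K ∣ Nat.card H := Subgroup.card_dvd_of_le hKH.le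
  have h2 : Nat.card H / Nat.card K ∣ Nat.card H := Nat.div_dvd_of_dvd h1
  exact hcard p hp (hpd.trans (h2.trans (Subgroup.card_subgroup_dvd_card H)))

/-- a group of order 12 is σ-nilpotent when `σ i ⊇ {2,3}`. -/
lemma sigmaNilpotent_of_card_twelve {ι : Type*} (σ : ι → Set ℕ) (G : Type*) [Group G]
    [Finite G] (i : ι) (h12 : Nat.card G = 12)
    (hσ : ∀ p : ℕ, p.Prime → p ∣ 12 → p ∈ σ i) :
    SigmaNilpotent σ G := by
  rintro H K ⟨hH, hK, hKH, -⟩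
  refine ⟨i, fun p hp hpd => ?_⟩
  have h1 : Nat.card K ∣ Nat.card H := Subgroup.card_dvd_of_le hKH.le
  have hH12 : Nat.card H ∣ 12 := h12 ▸ Subgroup.card_subgroup_dvd_card H
  have h2 : Nat.card H / Nat.card K ∣ 12 := (Nat.div_dvd_of_dvd h1).trans hH12
  have hne : Nonempty (chiefCentralizer H K) := by
    refine ⟨⟨1, fun h hh => ?_⟩⟩
    simpa using K.one_mem
  have hc1 : 0 < Nat.card (chiefCentralizer H K) := Nat.card_pos
  have hc12 : Nat.card (chiefCentralizer H K) ≤ 12 := by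
    rw [← h12]
    exact Nat.card_le_card_of_injective _ Subtype.val_injective
  have h3 : Nat.card G / Nat.card (chiefCentralizer H K) ∣ 12 := by
    rw [h12]
    set c := Nat.card (chiefCentralizer H K)
    interval_cases c <;> norm_num
  rcases (Nat.Prime.dvd_mul hp).mp hpd with h | h
  · exact hσ p hp (h.trans h2)
  · exact hσ p hp (h.trans h3)

/-- the elements of a `zpowers` subgroup commute. -/
lemma zpowers_comm {G : Type*} [Group G] (a : G)
    (x y : Subgroup.zpowers a) : x * y = y * x := by
  obtain ⟨m, hm⟩ := Subgroup.mem_zpowers_iff.mp x.2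
  obtain ⟨n, hn⟩ := Subgroup.mem_zpowers_iff.mp y.2
  ext
  show (x : G) * y = (y : G) * x
  rw [← hm, ← hn, ← zpow_add, ← zpow_add, add_comm]

open Fin.CommRing in
lemma key_rot (x : Fin 5) (k : ℕ) : ((finRotate 5) ^ k) x = x + k := by
  induction k with
  | zero => simp
  | succ n ih =>
    rw [pow_succ']
    rw [Equiv.Perm.mul_apply, ih, finRotate_succ_apply]
    push_cast
    ring

open Fin.CommRing in
lemma prod_eq_univ :
    (stab4 : Set (alternatingGroup (Fin 5))) * (Subgroup.zpowers c5 : Set (alternatingGroup (Fin 5)))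
      = Set.univ := by
  ext g
  simp only [Set.mem_univ, iff_true]
  set t : Fin 5 := ((g : Equiv.Perm (Fin 5)))⁻¹ 4 with ht
  set k : ℕ := (4 - t : Fin 5).val with hk
  have hck : ((c5 ^ k : alternatingGroup (Fin 5)) : Equiv.Perm (Fin 5)) = (finRotate 5) ^ k := by
    push_cast [c5]; rfl
  have htk : ((finRotate 5) ^ k) t = 4 := by
    rw [key_rot, hk, Fin.cast_val_eq_self]
    ring
  refine ⟨g * (c5 ^ k)⁻¹, ?_, c5 ^ k, Subgroup.zpow_mem _ (Subgroup.mem_zpowers c5) k, by group⟩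
  show ((g * (c5 ^ k)⁻¹ : alternatingGroup (Fin 5)) : Equiv.Perm (Fin 5)) 4 = 4
  rw [Subgroup.coe_mul, Subgroup.coe_inv, hck, Equiv.Perm.mul_apply]
  have : ((finRotate 5 ^ k)⁻¹ : Equiv.Perm (Fin 5)) 4 = t :=
    Equiv.Perm.inv_eq_iff_eq.mpr htk.symm
  rw [this, ht]
  exact Equiv.apply_symm_apply _ _

lemma card_A5 : Nat.card (alternatingGroup (Fin 5)) = 60 := by
  rw [Nat.card_eq_fintype_card]
  have h2 := two_mul_card_alternatingGroup (α := Fin 5)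
  rw [Fintype.card_perm, Fintype.card_fin] at h2
  have h3 : Nat.factorial 5 = 120 := by decide
  rw [h3] at h2
  omega

/-- With `σ₁ = {2,3}`, `σ₂ = {5}`, `σ₃` the remaining primes, `A₅` is the product
of two σ-nilpotent subgroups (a copy of `A₄` of order 12 and a Sylow 5-subgroup of
order 5), but `A₅` is not σ-soluble. -/
theorem alternatingGroup_five_product_of_sigma_nilpotents_not_sigma_soluble :
    letI σ : Fin 3 → Set ℕ :=
      ![{2, 3}, {5}, {p : ℕ | p.Prime ∧ p ∉ ({2, 3, 5} : Set ℕ)}]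
    ∃ A B : Subgroup (alternatingGroup (Fin 5)),
      Nat.card A = 12 ∧ Nat.card B = 5 ∧
      SigmaNilpotent σ A ∧ SigmaNilpotent σ B ∧
      (A : Set (alternatingGroup (Fin 5))) * (B : Set (alternatingGroup (Fin 5)))
        = Set.univ ∧
      ¬ SigmaSoluble σ (alternatingGroup (Fin 5)) := by
  refine ⟨stab4, Subgroup.zpowers c5, card_stab4, card_B, ?_, ?_, prod_eq_univ, ?_⟩
  · refine sigmaNilpotent_of_card_twelve _ _ 0 card_stab4 (fun p hp hd => ?_)
    have hle : p ≤ 12 := Nat.le_of_dvd (by norm_num) hd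
    have h2le : 2 ≤ p := hp.two_le
    have hp23 : p = 2 ∨ p = 3 := by
      interval_cases p <;> revert hp hd <;> decide
    show p ∈ ({2, 3} : Set ℕ)
    rcases hp23 with h | h <;> simp [h]
  · refine sigmaNilpotent_of_comm _ _ 1 (zpowers_comm c5) (fun p hp hd => ?_)
    rw [card_B] at hd
    have : p = 5 := (Nat.prime_dvd_prime_iff_eq hp (by norm_num)).mp hd
    rw [this]
    show (5 : ℕ) ∈ ({5} : Set ℕ)
    rfl
  · intro hsol
    have hchief : IsChiefFactor (⊤ : Subgroup (alternatingGroup (Fin 5))) ⊥ := by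
      refine ⟨inferInstance, inferInstance, ?_, fun L hL _ _ => hL.eq_bot_or_eq_top⟩
      rw [bot_lt_iff_ne_bot]
      intro h
      have h60 := card_A5
      rw [← Subgroup.card_top (G := alternatingGroup (Fin 5)), h, Subgroup.card_bot] at h60
      norm_num at h60
    obtain ⟨i, hi⟩ := hsol ⊤ ⊥ hchief
    rw [Subgroup.card_top, Subgroup.card_bot, card_A5] at hi
    fin_cases i
    · have h5 : (5 : ℕ) ∈ ({2, 3} : Set ℕ) := hi 5 (by norm_num) (by norm_num)
      simp at h5
    · have h2 : (2 : ℕ) ∈ ({5} : Set ℕ) := hi 2 (by norm_num) (by norm_num)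
      simp at h2
    · have h2 : (2 : ℕ) ∈ {p : ℕ | p.Prime ∧ p ∉ ({2, 3, 5} : Set ℕ)} :=
        hi 2 (by norm_num) (by norm_num)
      exact h2.2 (by simp)
end
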